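/- arXiv:1311.5648 — 7 statements merged into one kernel-verified Lean document; each statement's English description precedes it below -/
import Mathlib

section
/- Let (X, Y, λ, q, α) be a Wall pairing of rank g, and let Y' ⊆ Y be any complement of the torsion subgroup Torsion(Y) in Y (i.e., Y = Y' ⊕ Torsion(Y)). Then the map Torsion(Y) → Hom(Y', ℤ/2) sending z to q(z, ·)|_{Y'} is a group isomorphism. -/
/-- A Wall pairing of rank `g`.  `X` is a free `ℤ`-module of rank `g` (with chosen
basis `bX`), `Y ≅ ℤ^g ⊕ (ℤ/2)^g` via `eY` (the images of the standard generators are the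
`y_i = eY (Pi.single i 1, 0)` and `z_i = eY (0, Pi.single i 1)`, the latter forming a basis of the
torsion subgroup), `lam` is the bilinear pairing, `qf` the symmetric bilinear form, and `alpha`
a quadratic-type refinement valued in an abelian group `A` with homomorphism `bd : ℤ/2 → A`. -/
structure WallPairing (g : ℕ) (X Y A : Type) [AddCommGroup X] [AddCommGroup Y]
    [AddCommGroup A] where
  lam : X →+ Y →+ ℤ
  qf : Y →+ Y →+ ZMod 2
  qf_symm : ∀ a b : Y, qf a b = qf b a
  bd : ZMod 2 →+ A
  alpha : Y → A
  alpha_add : ∀ a b : Y, alpha (a + b) = alpha a + alpha b + bd (qf a b)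
  bX : Module.Basis (Fin g) ℤ X
  eY : ((Fin g → ℤ) × (Fin g → ZMod 2)) ≃+ Y
  lam_xy : ∀ i j, lam (bX i) (eY (Pi.single j 1, 0)) = if i = j then 1 else 0
  lam_xz : ∀ i j, lam (bX i) (eY (0, Pi.single j 1)) = 0
  q_yz : ∀ i j, qf (eY (Pi.single i 1, 0)) (eY (0, Pi.single j 1)) = if i = j then 1 else 0
  q_yy : ∀ i j, qf (eY (Pi.single i 1, 0)) (eY (Pi.single j 1, 0)) = 0
  q_zz : ∀ i j, qf (eY (0, Pi.single i 1)) (eY (0, Pi.single j 1)) = 0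
  alpha_y : ∀ i, alpha (eY (Pi.single i 1, 0)) = 0
  alpha_z : ∀ i, alpha (eY (0, Pi.single i 1)) = 0

section WPAux
variable {g : ℕ} {X Y A : Type} [AddCommGroup X] [AddCommGroup Y] [AddCommGroup A]
  (W : WallPairing g X Y A)

lemma wp_pair_eq (a : Fin g → ℤ) (b : Fin g → ZMod 2) :
    (a, b) = (∑ i, a i • ((Pi.single i 1 : Fin g → ℤ), (0 : Fin g → ZMod 2)))
      + ∑ i, (b i).val • ((0 : Fin g → ℤ), (Pi.single i 1 : Fin g → ZMod 2)) := by
  rw [Prod.ext_iff]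
  constructor
  · simp only [Prod.fst_add, Prod.fst_sum, Prod.smul_mk, Prod.mk_add_mk]
    funext k
    simp [Pi.single_apply, Finset.sum_ite_eq]
  · simp only [Prod.snd_add, Prod.snd_sum, Prod.smul_mk]
    funext k
    simp only [Pi.add_apply, Finset.sum_apply, Pi.smul_apply, Pi.single_apply, smul_ite,
      smul_zero, Finset.sum_ite_eq, Finset.mem_univ, if_true, Pi.zero_apply, add_zero,
      zero_add, Finset.sum_const_zero]
    rw [nsmul_eq_mul, mul_one]
    exact (ZMod.natCast_rightInverse (b k)).symm

lemma wp_eY_eq (a : Fin g → ℤ) (b : Fin g → ZMod 2) :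
    W.eY (a, b) = (∑ i, a i • W.eY (Pi.single i 1, 0))
      + ∑ i, (b i).val • W.eY (0, Pi.single i 1) := by
  conv_lhs => rw [wp_pair_eq a b]
  simp only [map_add, map_sum, map_zsmul, map_nsmul]

lemma wp_qf_formula (c : Fin g → ZMod 2) (a : Fin g → ℤ) (b : Fin g → ZMod 2) :
    W.qf (W.eY (0, c)) (W.eY (a, b)) = ∑ i, (a i : ZMod 2) * c i := by
  have hzy : ∀ j i, W.qf (W.eY (0, Pi.single j 1)) (W.eY (Pi.single i 1, 0))
      = if i = j then 1 else 0 := fun j i => by rw [W.qf_symm]; exact W.q_yz i j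
  rw [wp_eY_eq W 0 c, wp_eY_eq W a b]
  simp only [Pi.zero_apply, zero_smul, Finset.sum_const_zero, zero_add,
    map_sum, map_nsmul, map_zsmul, map_add, AddMonoidHom.finset_sum_apply,
    AddMonoidHom.add_apply, AddMonoidHom.nsmul_apply]
  simp only [hzy, W.q_zz, smul_zero, Finset.sum_const_zero, add_zero, smul_ite,
    Finset.sum_ite_eq, Finset.mem_univ, if_true]
  refine Finset.sum_congr rfl fun x _ => ?_
  rw [nsmul_eq_mul, mul_one, ZMod.natCast_rightInverse (c x), zsmul_eq_mul]

lemma wp_mem_torsion (y : Y) :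
    y ∈ AddCommGroup.torsion Y ↔ (W.eY.symm y).1 = 0 := by
  constructor
  · intro h
    obtain ⟨n, hn, hny⟩ := isOfFinAddOrder_iff_nsmul_eq_zero.mp h
    have h0 : n • W.eY.symm y = 0 := by rw [← map_nsmul, hny, map_zero]
    have h1 : n • (W.eY.symm y).1 = 0 := congrArg Prod.fst h0
    funext k
    have h2 := congrFun h1 k
    simp only [Pi.smul_apply, Pi.zero_apply, nsmul_eq_mul] at h2
    rcases mul_eq_zero.mp h2 with h3 | h3
    · exact absurd (Int.natCast_eq_zero.mp h3) hn.ne'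
    · exact h3
  · intro h
    refine isOfFinAddOrder_iff_nsmul_eq_zero.mpr ⟨2, two_pos, ?_⟩
    apply W.eY.symm.injective
    rw [map_nsmul, map_zero]
    refine Prod.ext ?_ ?_
    · rw [Prod.smul_fst, h, smul_zero]; rfl
    · rw [Prod.smul_snd]
      funext k
      simp only [Pi.smul_apply, Pi.zero_apply, nsmul_eq_mul,
        show ((2 : ℕ) : ZMod 2) = 0 by decide, zero_mul]
      rfl

lemma wp_torsion_eq (z : Y) (hz : z ∈ AddCommGroup.torsion Y) :
    z = W.eY (0, (W.eY.symm z).2) := by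
  conv_lhs => rw [← W.eY.apply_symm_apply z]
  congr 1
  exact Prod.ext ((wp_mem_torsion W z).mp hz) rfl

lemma wp_qf_torsion_torsion (z t : Y) (hz : z ∈ AddCommGroup.torsion Y)
    (ht : t ∈ AddCommGroup.torsion Y) : W.qf z t = 0 := by
  rw [wp_torsion_eq W z hz, wp_torsion_eq W t ht, wp_qf_formula]
  simp

lemma wp_qf_y (c : Fin g → ZMod 2) (j : Fin g) :
    W.qf (W.eY (0, c)) (W.eY (Pi.single j 1, 0)) = c j := by
  rw [wp_qf_formula]
  rw [Finset.sum_eq_single j]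
  · simp
  · intro i _ hij
    simp [Pi.single_apply, hij]
  · simp

end WPAux

/-- If `Y'` is any complement of the torsion subgroup of `Y`, then
`Torsion(Y) → Hom(Y', ℤ/2)`, `z ↦ q(z,·)|_{Y'}` is a group isomorphism. -/
theorem wallPairing_q_perfect_on_torsion {g : ℕ} {X Y A : Type} [AddCommGroup X]
    [AddCommGroup Y] [AddCommGroup A] (W : WallPairing g X Y A)
    (Y' : AddSubgroup Y) (hY' : IsCompl Y' (AddCommGroup.torsion Y)) :
    Function.Bijective
      (fun z : AddCommGroup.torsion Y => (W.qf (z : Y)).comp Y'.subtype) := by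
  constructor
  · rintro ⟨z1, hz1⟩ ⟨z2, hz2⟩ h
    have hall : ∀ y : Y, W.qf z1 y = W.qf z2 y := by
      intro y
      have hy : y ∈ Y' ⊔ AddCommGroup.torsion Y := by rw [hY'.sup_eq_top]; trivial
      rw [AddSubgroup.mem_sup] at hy
      obtain ⟨p, hp, t, ht, rfl⟩ := hy
      have h1 : W.qf z1 p = W.qf z2 p := DFunLike.congr_fun h (⟨p, hp⟩ : Y')
      rw [map_add, map_add, h1, wp_qf_torsion_torsion W z1 t hz1 ht,
        wp_qf_torsion_torsion W z2 t hz2 ht]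
    have hc : (W.eY.symm z1).2 = (W.eY.symm z2).2 := by
      funext j
      have := hall (W.eY (Pi.single j 1, 0))
      rwa [wp_torsion_eq W z1 hz1, wp_torsion_eq W z2 hz2, wp_qf_y, wp_qf_y] at this
    refine Subtype.ext ?_
    show z1 = z2
    rw [wp_torsion_eq W z1 hz1, wp_torsion_eq W z2 hz2, hc]
  · intro φ
    have hcompl : IsCompl (AddSubgroup.toIntSubmodule Y')
        (AddSubgroup.toIntSubmodule (AddCommGroup.torsion Y)) :=
      AddSubgroup.toIntSubmodule.isCompl hY'
    set π := Submodule.projectionOnto _ _ hcompl with hπ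
    set e : (AddSubgroup.toIntSubmodule Y') →+ Y' :=
      { toFun := fun u => ⟨u.1, u.2⟩
        map_zero' := rfl
        map_add' := fun _ _ => rfl } with he
    set ψ : Y →+ ZMod 2 := φ.comp (e.comp π.toAddMonoidHom) with hψdef
    have hψtor : ∀ t : Y, t ∈ AddCommGroup.torsion Y → ψ t = 0 := by
      intro t ht
      have h0 : π t = 0 := (Submodule.projectionOnto_apply_eq_zero_iff hcompl).mpr ht
      show φ (e (π t)) = 0
      rw [h0, map_zero, map_zero]
    set c : Fin g → ZMod 2 := fun i => ψ (W.eY (Pi.single i 1, 0)) with hc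
    have hzT : W.eY (0, c) ∈ AddCommGroup.torsion Y := by
      rw [wp_mem_torsion W]
      simp
    have hkey : ∀ y : Y, W.qf (W.eY (0, c)) y = ψ y := by
      intro y
      conv_lhs => rw [← W.eY.apply_symm_apply y]
      conv_rhs => rw [← W.eY.apply_symm_apply y]
      rw [wp_qf_formula]
      have hsplit : W.eY (W.eY.symm y) =
          W.eY ((W.eY.symm y).1, 0) + W.eY (0, (W.eY.symm y).2) := by
        rw [← map_add]
        congr 1
        rw [Prod.mk_add_mk, add_zero, zero_add]
      rw [hsplit, map_add,
        hψtor (W.eY (0, (W.eY.symm y).2)) ((wp_mem_torsion W _).mpr (by simp)),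
        add_zero, wp_eY_eq W (W.eY.symm y).1 0]
      simp only [Pi.zero_apply, ZMod.val_zero, zero_smul, Finset.sum_const_zero, add_zero,
        map_sum, map_zsmul]
      refine Finset.sum_congr rfl fun i _ => ?_
      show ((W.eY.symm y).1 i : ZMod 2) * c i = ((W.eY.symm y).1 i) • c i
      rw [zsmul_eq_mul]
    refine ⟨⟨W.eY (0, c), hzT⟩, ?_⟩
    ext x
    show W.qf (W.eY (0, c)) (Y'.subtype x) = φ x
    rw [hkey]
    show φ (e (π (x : Y))) = φ x
    congr 1
    have h := Submodule.projectionOnto_apply_left hcompl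
      (⟨(x : Y), x.2⟩ : AddSubgroup.toIntSubmodule Y')
    apply Subtype.ext
    show ((π (x : Y) : Y)) = (x : Y)
    exact congrArg Subtype.val h
end

section
/- Let (X, Y, λ, q, α) be a Wall pairing of rank g. Then there exists a unique group homomorphism ρ : X → Torsion(Y) such that q(ρ(x), y) equals the reduction of λ(x, y) modulo 2 for all (x, y) ∈ X × Y. -/
/-- Every element of `Y` decomposes as an integer combination of the `y_i` plus a
natural combination of the `z_i`. -/
lemma wp_decomp {g : ℕ} {X Y A : Type} [AddCommGroup X] [AddCommGroup Y] [AddCommGroup A]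
    (W : WallPairing g X Y A) (y : Y) :
    y = ∑ i, (W.eY.symm y).1 i • W.eY (Pi.single i 1, 0)
        + ∑ i, ((W.eY.symm y).2 i).val • W.eY (0, Pi.single i 1) := by
  have hpair : ∀ (u : Fin g → ℤ) (v : Fin g → ZMod 2),
      ((u, v) : (Fin g → ℤ) × (Fin g → ZMod 2))
        = ∑ i, u i • (((Pi.single i 1 : Fin g → ℤ), 0) : (Fin g → ℤ) × (Fin g → ZMod 2))
          + ∑ i, (v i).val • ((0, (Pi.single i 1 : Fin g → ZMod 2)) : (Fin g → ℤ) × (Fin g → ZMod 2)) := by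
    intro u v
    ext j
    · simp only [Prod.fst_add, Prod.fst_sum, Prod.smul_mk, smul_zero, Finset.sum_const_zero,
        add_zero, Finset.sum_apply, Pi.smul_apply, Pi.single_apply, smul_ite,
        Finset.sum_ite_eq, Finset.mem_univ, if_true]
      rw [smul_eq_mul, mul_one]
    · simp only [Prod.snd_add, Prod.snd_sum, Prod.smul_mk, smul_zero, Finset.sum_const_zero,
        zero_add, Finset.sum_apply, Pi.smul_apply, Pi.single_apply, smul_ite,
        Finset.sum_ite_eq, Finset.mem_univ, if_true]
      rw [nsmul_eq_mul, mul_one, ZMod.natCast_val, ZMod.cast_id]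
  conv_lhs => rw [← W.eY.apply_symm_apply y, show W.eY.symm y = ((W.eY.symm y).1, (W.eY.symm y).2) from rfl,
    hpair (W.eY.symm y).1 (W.eY.symm y).2]
  simp only [map_add, map_sum, map_zsmul, map_nsmul]

/-- There exists a unique group homomorphism `ρ : X → Torsion(Y)` such that
`q(ρ(x), y)` equals the mod-2 reduction of `λ(x, y)` for all x, y. -/
theorem wallPairing_exists_unique_rho {g : ℕ} {X Y A : Type} [AddCommGroup X]
    [AddCommGroup Y] [AddCommGroup A] (W : WallPairing g X Y A) :
    ∃! ρ : X →+ AddCommGroup.torsion Y,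
      ∀ (x : X) (y : Y), W.qf (ρ x : Y) y = ((W.lam x y : ℤ) : ZMod 2) := by
  classical
  set z : Fin g → Y := fun i => W.eY (0, Pi.single i 1) with hzdef
  have hz : ∀ i, z i ∈ AddCommGroup.torsion Y := by
    intro i
    rw [AddCommGroup.mem_torsion, isOfFinAddOrder_iff_nsmul_eq_zero]
    refine ⟨2, two_pos, ?_⟩
    have h0 : (2 : ℕ) • (((0 : Fin g → ℤ), (Pi.single i 1 : Fin g → ZMod 2))
        : (Fin g → ℤ) × (Fin g → ZMod 2)) = 0 := by
      ext j
      · simp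
      · simp [Pi.single_apply]
        exact fun _ => by decide
    rw [hzdef]
    simp only [← map_nsmul, h0, map_zero]
  set ρ : X →+ AddCommGroup.torsion Y :=
    (W.bX.constr ℤ (fun i => (⟨z i, hz i⟩ : AddCommGroup.torsion Y))).toAddMonoidHom with hρdef
  have hρb : ∀ i, ((ρ (W.bX i) : Y)) = z i := by
    intro i; rw [hρdef]; simp [Module.Basis.constr_basis]
  have hqzy : ∀ i x, W.qf (z i) (W.eY (Pi.single x 1, 0)) = if x = i then 1 else 0 := by
    intro i x; rw [hzdef]; rw [W.qf_symm]; exact W.q_yz x i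
  have hqzz : ∀ i x, W.qf (z i) (W.eY (0, Pi.single x 1)) = 0 := by
    intro i x; rw [hzdef]; exact W.q_zz i x
  have hkey : ∀ i (y : Y), W.qf (z i) y = ((W.lam (W.bX i) y : ℤ) : ZMod 2) := by
    intro i y
    conv_lhs => rw [wp_decomp W y]
    conv_rhs => rw [wp_decomp W y]
    simp only [map_add, map_sum, map_zsmul, map_nsmul, hqzy, hqzz, W.lam_xy, W.lam_xz,
      smul_zero, Finset.sum_const_zero, add_zero, smul_ite]
    push_cast
    simp [Finset.sum_ite_eq, Finset.sum_ite_eq']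
  have main : ∀ (x : X) (y : Y), W.qf ((ρ x : Y)) y = ((W.lam x y : ℤ) : ZMod 2) := by
    intro x y
    set F1 : X →+ ZMod 2 := (W.qf.flip y).comp ((AddCommGroup.torsion Y).subtype.comp ρ) with hF1
    set F2 : X →+ ZMod 2 := (Int.castAddHom (ZMod 2)).comp (W.lam.flip y) with hF2
    have hF : F1.toIntLinearMap = F2.toIntLinearMap := by
      apply Module.Basis.ext W.bX
      intro i
      simpa [hF1, hF2, hρb] using hkey i y
    have := DFunLike.congr_fun hF x
    simpa [hF1, hF2] using this
  refine ⟨ρ, main, ?_⟩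
  intro ρ' h'
  ext x
  set t : Y := (ρ' x : Y) - (ρ x : Y) with htdef
  have ht : t ∈ AddCommGroup.torsion Y := sub_mem (ρ' x).2 (ρ x).2
  have hq0 : ∀ y : Y, W.qf t y = 0 := by
    intro y
    rw [htdef]
    simp only [map_sub, AddMonoidHom.sub_apply]
    rw [h' x y, main x y, sub_self]
  -- the torsion-free part of t vanishes
  have hfst : (W.eY.symm t).1 = 0 := by
    obtain ⟨n, hn, hns⟩ := isOfFinAddOrder_iff_nsmul_eq_zero.mp ((AddCommGroup.mem_torsion (G := Y) (g := t)).mp ht)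
    have : n • W.eY.symm t = 0 := by rw [← map_nsmul, hns, map_zero]
    have hfst' : n • (W.eY.symm t).1 = 0 := congrArg Prod.fst this
    funext j
    have := congrFun hfst' j
    simp only [Pi.smul_apply, smul_eq_zero, Pi.zero_apply] at this ⊢
    rcases this with h | h
    · exact absurd h hn.ne'
    · exact h
  have hsnd : (W.eY.symm t).2 = 0 := by
    funext j
    have hdec := wp_decomp W t
    rw [hfst] at hdec
    have h1 : W.qf (W.eY (Pi.single j 1, 0)) t = 0 := by rw [← W.qf_symm]; exact hq0 _
    rw [hdec] at h1
    simp only [Pi.zero_apply, zero_smul, Finset.sum_const_zero, zero_add, map_sum, map_nsmul,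
      W.q_yz, smul_ite, smul_zero, Finset.sum_ite_eq] at h1
    simpa [ZMod.natCast_val, ZMod.cast_id] using h1
  have : W.eY.symm t = 0 := by
    ext j
    · rw [hfst]; rfl
    · rw [hsnd]; rfl
  have ht0 : t = 0 := by
    have := congrArg W.eY this
    rwa [AddEquiv.apply_symm_apply, map_zero] at this
  have := sub_eq_zero.mp ht0
  exact this
end

section
/- Let (X, Y, λ, q, α) be a Wall pairing of rank g. Let V ⊆ X and W ⊆ Y be free submodules of rank k > 0, each a direct summand, such that the restriction λ|_{V×W} : V × W → ℤ is a perfect pairing. Define W^⊥ = {x ∈ X : λ(x,w) = 0 for all w ∈ W}, V^⊥ = {y ∈ Y : λ(v,y) = 0 for all v ∈ V}, and Ŵ = {y ∈ Y : q(y,w) = 0 for all w ∈ W}. Then the tuple (W^⊥, V^⊥ ∩ Ŵ) together with the restrictions of λ, q, α is a Wall pairing of rank g − k. -/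
/-- The subgroup of `X` of elements `x` with `λ(x, w) = 0` for all `w ∈ S` (denoted `S^⊥`). -/
def lamPerpX {X Y : Type} [AddCommGroup X] [AddCommGroup Y] (lam : X →+ Y →+ ℤ)
    (S : AddSubgroup Y) : AddSubgroup X where
  carrier := {x : X | ∀ w ∈ S, lam x w = 0}
  zero_mem' := by intro w hw; simp
  add_mem' := by intro a b ha hb w hw; simp [ha w hw, hb w hw]
  neg_mem' := by intro a ha w hw; simp [ha w hw]

/-- The subgroup of `Y` of elements `y` with `λ(v, y) = 0` for all `v ∈ S` (denoted `S^⊥`). -/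
def lamPerpY {X Y : Type} [AddCommGroup X] [AddCommGroup Y] (lam : X →+ Y →+ ℤ)
    (S : AddSubgroup X) : AddSubgroup Y where
  carrier := {y : Y | ∀ v ∈ S, lam v y = 0}
  zero_mem' := by intro v hv; simp
  add_mem' := by intro a b ha hb v hv; simp [ha v hv, hb v hv]
  neg_mem' := by intro a ha v hv; simp [ha v hv]

/-- The subgroup of `Y` of elements `y` with `q(y, w) = 0` for all `w ∈ S` (denoted `Ŝ`). -/
def qPerp {Y : Type} [AddCommGroup Y] (q : Y →+ Y →+ ZMod 2) (S : AddSubgroup Y) :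
    AddSubgroup Y where
  carrier := {y : Y | ∀ w ∈ S, q y w = 0}
  zero_mem' := by intro w hw; simp
  add_mem' := by intro a b ha hb w hw; simp [ha w hw, hb w hw]
  neg_mem' := by intro a ha w hw; simp [ha w hw]

namespace WallAux
open Module
variable {g : ℕ} {X Y A : Type} [AddCommGroup X] [AddCommGroup Y] [AddCommGroup A]
variable (M : WallPairing g X Y A)

/-- free coordinates of `y` -/
def ca (y : Y) : Fin g → ℤ := (M.eY.symm y).1
/-- torsion coordinates of `y` -/
def cb (y : Y) : Fin g → ZMod 2 := (M.eY.symm y).2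
/-- mod-2 reduction of free coordinates -/
def rho (y : Y) : Fin g → ZMod 2 := fun i => ((ca M y i : ℤ) : ZMod 2)

@[simp] lemma ca_add (y y' : Y) : ca M (y + y') = ca M y + ca M y' := by
  simp [ca]
@[simp] lemma cb_add (y y' : Y) : cb M (y + y') = cb M y + cb M y' := by
  simp [cb]
@[simp] lemma rho_add (y y' : Y) : rho M (y + y') = rho M y + rho M y' := by
  funext i; simp [rho]
@[simp] lemma ca_eY (p : (Fin g → ℤ) × (Fin g → ZMod 2)) : ca M (M.eY p) = p.1 := by
  simp [ca]
@[simp] lemma cb_eY (p : (Fin g → ℤ) × (Fin g → ZMod 2)) : cb M (M.eY p) = p.2 := by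
  simp [cb]
lemma eY_coords (y : Y) : M.eY (ca M y, cb M y) = y := by
  simp [ca, cb]

lemma homY_ext {C : Type} [AddCommGroup C] (f h : Y →+ C)
    (h1 : ∀ i, f (M.eY (Pi.single i 1, 0)) = h (M.eY (Pi.single i 1, 0)))
    (h2 : ∀ i, f (M.eY (0, Pi.single i 1)) = h (M.eY (0, Pi.single i 1))) : f = h := by
  have e1 : f.comp (M.eY.toAddMonoidHom.comp (AddMonoidHom.inl (Fin g → ℤ) (Fin g → ZMod 2)))
      = h.comp (M.eY.toAddMonoidHom.comp (AddMonoidHom.inl (Fin g → ℤ) (Fin g → ZMod 2))) := by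
    apply AddMonoidHom.functions_ext
    intro i x
    have hs : (Pi.single i x : Fin g → ℤ) = x • Pi.single i (1:ℤ) := by
      rw [← Pi.single_smul]; norm_num
    have hp : ((Pi.single i x, (0 : Fin g → ZMod 2)) :
        (Fin g → ℤ) × (Fin g → ZMod 2)) = x • (Pi.single i (1:ℤ), (0 : Fin g → ZMod 2)) := by
      rw [Prod.smul_def, smul_zero, ← hs]
    simp only [AddMonoidHom.comp_apply, AddMonoidHom.inl_apply, AddEquiv.coe_toAddMonoidHom, hp,
      map_zsmul]
    rw [h1]
  have e2 : f.comp (M.eY.toAddMonoidHom.comp (AddMonoidHom.inr (Fin g → ℤ) (Fin g → ZMod 2)))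
      = h.comp (M.eY.toAddMonoidHom.comp (AddMonoidHom.inr (Fin g → ℤ) (Fin g → ZMod 2))) := by
    apply AddMonoidHom.functions_ext
    intro i x
    have hs : (Pi.single i x : Fin g → ZMod 2) = x.val • Pi.single i (1:ZMod 2) := by
      rw [← Pi.single_smul]
      rw [nsmul_eq_mul, mul_one, ZMod.natCast_val, ZMod.cast_id]
    have hp : (((0 : Fin g → ℤ), Pi.single i x) :
        (Fin g → ℤ) × (Fin g → ZMod 2)) = x.val • ((0 : Fin g → ℤ), Pi.single i (1:ZMod 2)) := by
      rw [Prod.smul_def, smul_zero, ← hs]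
    simp only [AddMonoidHom.comp_apply, AddMonoidHom.inr_apply, AddEquiv.coe_toAddMonoidHom, hp,
      map_nsmul]
    rw [h2]
  ext y
  have : y = M.eY (ca M y, 0) + M.eY (0, cb M y) := by
    rw [← map_add]
    simp [Prod.mk_add_mk, eY_coords]
  rw [this, map_add, map_add]
  have := congrFun (congrArg (fun (F : (Fin g → ℤ) →+ C) => (F : (Fin g → ℤ) → C)) e1) (ca M y)
  have h2' := congrFun (congrArg (fun (F : (Fin g → ZMod 2) →+ C) => (F : (Fin g → ZMod 2) → C)) e2) (cb M y)
  simp only [AddMonoidHom.comp_apply, AddMonoidHom.inl_apply, AddMonoidHom.inr_apply,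
    AddEquiv.coe_toAddMonoidHom] at this h2'
  rw [this, h2']


lemma homX_ext {C : Type} [AddCommGroup C] (f h : X →+ C)
    (hb : ∀ i, f (M.bX i) = h (M.bX i)) : f = h := by
  have := M.bX.ext (f₁ := f.toIntLinearMap) (f₂ := h.toIntLinearMap) hb
  ext x
  exact congrArg (fun (φ : X →ₗ[ℤ] C) => φ x) this

lemma lam_repr (i : Fin g) (y : Y) : M.lam (M.bX i) y = ca M y i := by
  have := homY_ext M (M.lam (M.bX i))
    ((Pi.evalAddMonoidHom (fun _ : Fin g => ℤ) i).comp
      ((AddMonoidHom.fst (Fin g → ℤ) (Fin g → ZMod 2)).comp M.eY.symm.toAddMonoidHom))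
    (by intro j
        simp only [AddMonoidHom.comp_apply, AddEquiv.coe_toAddMonoidHom,
          AddEquiv.symm_apply_apply, AddMonoidHom.coe_fst, Pi.evalAddMonoidHom_apply]
        rw [M.lam_xy i j]
        simp [Pi.single_apply])
    (by intro j
        simp only [AddMonoidHom.comp_apply, AddEquiv.coe_toAddMonoidHom,
          AddEquiv.symm_apply_apply, AddMonoidHom.coe_fst, Pi.evalAddMonoidHom_apply]
        rw [M.lam_xz i j]
        simp)
  exact congrArg (fun (φ : Y →+ ℤ) => φ y) this

lemma lam_formula (x : X) (y : Y) :
    M.lam x y = ∑ l, M.bX.repr x l * ca M y l := by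
  conv_lhs => rw [← M.bX.sum_equivFun x]
  rw [map_sum, AddMonoidHom.finset_sum_apply]
  apply Finset.sum_congr rfl
  intro l _
  rw [map_zsmul]
  simp [lam_repr, Basis.equivFun_apply, smul_eq_mul]

lemma qA (i : Fin g) (y' : Y) :
    M.qf (M.eY (Pi.single i 1, 0)) y' = cb M y' i := by
  have := homY_ext M (M.qf (M.eY (Pi.single i 1, 0)))
    ((Pi.evalAddMonoidHom (fun _ : Fin g => ZMod 2) i).comp
      ((AddMonoidHom.snd (Fin g → ℤ) (Fin g → ZMod 2)).comp M.eY.symm.toAddMonoidHom))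
    (by intro j
        simp only [AddMonoidHom.comp_apply, AddEquiv.coe_toAddMonoidHom,
          AddEquiv.symm_apply_apply, AddMonoidHom.coe_snd, Pi.evalAddMonoidHom_apply]
        rw [M.q_yy i j]; simp)
    (by intro j
        simp only [AddMonoidHom.comp_apply, AddEquiv.coe_toAddMonoidHom,
          AddEquiv.symm_apply_apply, AddMonoidHom.coe_snd, Pi.evalAddMonoidHom_apply]
        rw [M.q_yz i j]; simp [Pi.single_apply])
  exact congrArg (fun (φ : Y →+ ZMod 2) => φ y') this

lemma qB (i : Fin g) (y' : Y) :
    M.qf (M.eY (0, Pi.single i 1)) y' = rho M y' i := by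
  have hrho : ∀ y' : Y, rho M y' i =
      ((Int.castAddHom (ZMod 2)).comp ((Pi.evalAddMonoidHom (fun _ : Fin g => ℤ) i).comp
      ((AddMonoidHom.fst (Fin g → ℤ) (Fin g → ZMod 2)).comp M.eY.symm.toAddMonoidHom))) y' := by
    intro y'; rfl
  have := homY_ext M (M.qf (M.eY (0, Pi.single i 1)))
    ((Int.castAddHom (ZMod 2)).comp ((Pi.evalAddMonoidHom (fun _ : Fin g => ℤ) i).comp
      ((AddMonoidHom.fst (Fin g → ℤ) (Fin g → ZMod 2)).comp M.eY.symm.toAddMonoidHom)))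
    (by intro j
        rw [← hrho]
        rw [M.qf_symm, M.q_yz j i]
        simp [rho, ca, Pi.single_apply]
        split
        · rename_i h; subst h; simp
        · rename_i h
          rw [if_neg (fun hh => h hh.symm)])
    (by intro j
        rw [← hrho, M.q_zz i j]
        simp [rho, ca])
  rw [congrArg (fun (φ : Y →+ ZMod 2) => φ y') this, ← hrho]

/-- the mod 2 pairing expression, as a hom in the first variable -/
def qExpr (y' : Y) : Y →+ ZMod 2 :=
  AddMonoidHom.mk' (fun y => ∑ l, (rho M y l * cb M y' l + cb M y l * rho M y' l))
    (by intro a b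
        rw [← Finset.sum_add_distrib]
        apply Finset.sum_congr rfl
        intro l _
        simp only [rho_add, cb_add, Pi.add_apply]
        ring)

lemma q_formula (y y' : Y) :
    M.qf y y' = ∑ l, (rho M y l * cb M y' l + cb M y l * rho M y' l) := by
  have := homY_ext M (M.qf.flip y') (qExpr M y')
    (by intro i
        simp only [AddMonoidHom.flip_apply, qExpr, AddMonoidHom.mk'_apply]
        rw [qA M i y']
        simp [rho, ca, cb, Pi.single_apply, ite_mul])
    (by intro i
        simp only [AddMonoidHom.flip_apply, qExpr, AddMonoidHom.mk'_apply]
        rw [qB M i y']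
        simp [rho, ca, cb, Pi.single_apply, ite_mul])
  exact congrArg (fun (φ : Y →+ ZMod 2) => φ y) this

lemma two_eq_zero (c : ZMod 2) : c + c = 0 := by
  have h2 : (2 : ZMod 2) = 0 := rfl
  rw [← two_mul, h2, zero_mul]

/-- `alpha - bd ∘ ε` is additive -/
def aExpr : Y →+ A :=
  AddMonoidHom.mk' (fun y => M.alpha y - M.bd (∑ l, rho M y l * cb M y l))
    (by intro a b
        rw [M.alpha_add a b, q_formula M a b]
        have : (∑ l, rho M (a+b) l * cb M (a+b) l)
            = (∑ l, rho M a l * cb M a l) + (∑ l, rho M b l * cb M b l)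
              + (∑ l, (rho M a l * cb M b l + cb M a l * rho M b l)) := by
          rw [← Finset.sum_add_distrib, ← Finset.sum_add_distrib]
          apply Finset.sum_congr rfl
          intro l _
          simp only [rho_add, cb_add, Pi.add_apply]
          ring
        rw [this]
        simp only [map_add]
        abel)

lemma alpha_formula (y : Y) : M.alpha y = M.bd (∑ l, rho M y l * cb M y l) := by
  have h0 : aExpr M = 0 := by
    apply homY_ext M
    · intro i
      simp [aExpr, M.alpha_y i, cb, rho, ca]
    · intro i
      simp [aExpr, M.alpha_z i, cb, rho, ca]
  have := congrArg (fun (φ : Y →+ A) => φ y) h0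
  simp only [aExpr, AddMonoidHom.mk'_apply, AddMonoidHom.zero_apply] at this
  have := sub_eq_zero.mp this
  exact this

lemma lam_tor (x : X) (b : Fin g → ZMod 2) : M.lam x (M.eY (0, b)) = 0 := by
  rw [lam_formula]
  simp [ca]

lemma alpha_tor (b : Fin g → ZMod 2) : M.alpha (M.eY (0, b)) = 0 := by
  rw [alpha_formula]
  simp [rho, ca]

lemma alpha_zero : M.alpha 0 = 0 := by
  have := alpha_tor M 0
  rw [show ((0 : Fin g → ℤ), (0 : Fin g → ZMod 2)) = 0 from rfl, map_zero] at this
  exact this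

lemma q_tor_tor (b b' : Fin g → ZMod 2) : M.qf (M.eY (0, b)) (M.eY (0, b')) = 0 := by
  rw [q_formula]
  simp [rho, ca]

lemma q_tor_formula (b : Fin g → ZMod 2) (y : Y) :
    M.qf (M.eY (0, b)) y = ∑ l, b l * rho M y l := by
  rw [q_formula]
  simp [rho, ca, cb, mul_comm]

lemma q_alt (y : Y) : M.qf y y = 0 := by
  rw [q_formula]
  have : ∀ l : Fin g, rho M y l * cb M y l + cb M y l * rho M y l = 0 := by
    intro l; rw [mul_comm]; exact two_eq_zero _
  simp [this]

section Decomp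
variable (V : AddSubgroup X) (Wsub : AddSubgroup Y)

/-- `x ↦ λ(x,·)|_W` as a hom -/
def XtoW : X →+ (Wsub →+ ℤ) :=
  AddMonoidHom.mk' (fun x => (M.lam x).comp Wsub.subtype)
    (by intro a b; ext w; simp)

/-- `v ↦ λ(v,·)|_W` restricted to V -/
def VtoW : ↥V →+ (Wsub →+ ℤ) :=
  AddMonoidHom.mk' (fun v => (M.lam (v : X)).comp Wsub.subtype)
    (by intro a b; ext w; simp)

variable (hperf₁ : Function.Bijective fun v : V => (M.lam (v : X)).comp Wsub.subtype)

/-- the equivalence `V ≃ Hom(W,ℤ)` -/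
noncomputable def PhiE : ↥V ≃+ (Wsub →+ ℤ) :=
  AddEquiv.ofBijective (VtoW M V Wsub) hperf₁

/-- projection of `X` onto `V` along `W^⊥` -/
noncomputable def pV : X →+ ↥V :=
  ((PhiE M V Wsub hperf₁).symm.toAddMonoidHom).comp (XtoW M Wsub)

lemma pV_spec (x : X) (w : Y) (hw : w ∈ Wsub) :
    M.lam ((pV M V Wsub hperf₁ x : X)) w = M.lam x w := by
  have h : PhiE M V Wsub hperf₁ ((PhiE M V Wsub hperf₁).symm (XtoW M Wsub x))
      = XtoW M Wsub x := (PhiE M V Wsub hperf₁).apply_symm_apply _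
  exact congrArg (fun φ : Wsub →+ ℤ => φ ⟨w, hw⟩) h

lemma pV_on_V (v : ↥V) : pV M V Wsub hperf₁ (v : X) = v := by
  apply (PhiE M V Wsub hperf₁).injective
  exact (PhiE M V Wsub hperf₁).apply_symm_apply _

lemma pV_perp (x : X) (hx : x ∈ lamPerpX M.lam Wsub) : pV M V Wsub hperf₁ x = 0 := by
  have h1 : XtoW M Wsub x = 0 := by
    ext w
    show M.lam x ↑w = 0
    exact hx w.1 w.2
  apply (PhiE M V Wsub hperf₁).injective
  rw [map_zero]
  rw [show PhiE M V Wsub hperf₁ (pV M V Wsub hperf₁ x) = XtoW M Wsub x from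
    (PhiE M V Wsub hperf₁).apply_symm_apply _, h1]

lemma sub_pV_mem (x : X) : x - (pV M V Wsub hperf₁ x : X) ∈ lamPerpX M.lam Wsub := by
  intro w hw
  simp [pV_spec M V Wsub hperf₁ x w hw]

lemma isCompl_V_perp (hperf₁ : Function.Bijective fun v : V => (M.lam (v : X)).comp Wsub.subtype) :
    IsCompl (AddSubgroup.toIntSubmodule V)
      (AddSubgroup.toIntSubmodule (lamPerpX M.lam Wsub)) := by
  constructor
  · rw [Submodule.disjoint_def]
    intro x hxV hxP
    have h0 : pV M V Wsub hperf₁ x = 0 := pV_perp M V Wsub hperf₁ x hxP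
    have h1 : pV M V Wsub hperf₁ x = ⟨x, hxV⟩ := pV_on_V M V Wsub hperf₁ ⟨x, hxV⟩
    have := h1.symm.trans h0
    exact congrArg Subtype.val this
  · rw [codisjoint_iff, eq_top_iff]
    intro x _
    rw [Submodule.mem_sup]
    exact ⟨(pV M V Wsub hperf₁ x : X), (pV M V Wsub hperf₁ x).2,
      x - (pV M V Wsub hperf₁ x : X), sub_pV_mem M V Wsub hperf₁ x, by abel⟩

end Decomp

section Rank
variable (V : AddSubgroup X) (Wsub : AddSubgroup Y)

lemma exists_perp_basis {k : ℕ}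
    (hperf₁ : Function.Bijective fun v : V => (M.lam (v : X)).comp Wsub.subtype)
    (hV : Basis (Fin k) ℤ ↥V) :
    Nonempty (Basis (Fin (g-k)) ℤ ↥(lamPerpX M.lam Wsub)) := by
  classical
  obtain ⟨n, bP0⟩ := Submodule.basisOfPid M.bX
    (AddSubgroup.toIntSubmodule (lamPerpX M.lam Wsub))
  let ee : ↥(AddSubgroup.toIntSubmodule (lamPerpX M.lam Wsub)) ≃+ ↥(lamPerpX M.lam Wsub) :=
    { Equiv.subtypeEquivRight (fun x => Iff.rfl) with map_add' := fun a b => rfl }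
  let bP : Basis (Fin n) ℤ ↥(lamPerpX M.lam Wsub) := bP0.map ee.toIntLinearEquiv
  let s : (↥V × ↥(lamPerpX M.lam Wsub)) →+ X :=
    (V.subtype).comp (AddMonoidHom.fst _ _) +
      ((lamPerpX M.lam Wsub).subtype).comp (AddMonoidHom.snd _ _)
  have hs : ∀ vp, s vp = (vp.1 : X) + (vp.2 : X) := fun vp => rfl
  have hbij : Function.Bijective s := by
    constructor
    · intro a b hab
      rw [hs, hs] at hab
      have hp := congrArg (pV M V Wsub hperf₁) hab
      rw [map_add, map_add, pV_on_V, pV_on_V,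
        pV_perp M V Wsub hperf₁ _ a.2.2, pV_perp M V Wsub hperf₁ _ b.2.2,
        add_zero, add_zero] at hp
      have h2 : (a.2 : X) = (b.2 : X) := by
        have := congrArg (fun v : ↥V => (v : X)) hp
        simpa [this] using hab
      exact Prod.ext hp (Subtype.ext h2)
    · intro x
      refine ⟨(pV M V Wsub hperf₁ x, ⟨x - (pV M V Wsub hperf₁ x : X),
        sub_pV_mem M V Wsub hperf₁ x⟩), ?_⟩
      rw [hs]
      simp
  let eL := (AddEquiv.ofBijective s hbij).toIntLinearEquiv (modM := inferInstance) (modM₂ := inferInstance)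
  haveI : Module.Free ℤ ↥V := Module.Free.of_basis hV
  haveI : Module.Finite ℤ ↥V := Module.Finite.of_basis hV
  haveI : Module.Free ℤ ↥(lamPerpX M.lam Wsub) := Module.Free.of_basis bP
  haveI : Module.Finite ℤ ↥(lamPerpX M.lam Wsub) := Module.Finite.of_basis bP
  have h1 : Module.finrank ℤ X = k + n := by
    rw [← eL.finrank_eq, Module.finrank_prod, Module.finrank_eq_card_basis hV,
      Module.finrank_eq_card_basis bP, Fintype.card_fin, Fintype.card_fin]
  have h2 : Module.finrank ℤ X = g := by
    rw [Module.finrank_eq_card_basis M.bX, Fintype.card_fin]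
  have hn : n = g - k := by omega
  exact ⟨bP.reindex (finCongr hn)⟩

end Rank

lemma val_smul (c x : ZMod 2) : c.val • x = c * x := by
  rw [nsmul_eq_mul, ZMod.natCast_val, ZMod.cast_id]

lemma val_smul_add {G : Type} [AddCommMonoid G] (t : G) (ht : t + t = 0)
    (c c' : ZMod 2) : (c + c').val • t = c.val • t + c'.val • t := by
  have h2 : ∀ n : ℕ, n • t = (n % 2) • t := by
    intro n
    conv_lhs => rw [← Nat.div_add_mod n 2]
    rw [add_nsmul, mul_comm, mul_nsmul, smul_comm,
      (by rw [two_nsmul, ht] : (2:ℕ) • t = 0), smul_zero, zero_add]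
  rw [ZMod.val_add, ← h2, add_nsmul]

/-- inclusion of the torsion part -/
def torHom : (Fin g → ZMod 2) →+ Y :=
  M.eY.toAddMonoidHom.comp (AddMonoidHom.inr _ _)

@[simp] lemma torHom_apply (b : Fin g → ZMod 2) : torHom M b = M.eY (0, b) := rfl

lemma torHom_two (b : Fin g → ZMod 2) : torHom M b + torHom M b = 0 := by
  rw [← map_add]
  have : b + b = 0 := by funext l; exact two_eq_zero _
  rw [this, map_zero]

lemma q_beta (v : X) (y : Y) :
    M.qf (torHom M (fun l => ((M.bX.repr v l : ℤ) : ZMod 2))) y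
      = ((M.lam v y : ℤ) : ZMod 2) := by
  rw [torHom_apply, q_tor_formula, lam_formula]
  push_cast
  rfl

section Tor
variable (V : AddSubgroup X) (Wsub : AddSubgroup Y)

lemma exists_tor_fix {k : ℕ} (bW : Basis (Fin k) ℤ ↥Wsub)
    (hperf₁ : Function.Bijective fun v : V => (M.lam (v : X)).comp Wsub.subtype)
    (y : Y) :
    ∃ b : Fin g → ZMod 2, ∀ w ∈ Wsub, M.qf (torHom M b) w = M.qf y w := by
  classical
  choose vd hvd using hperf₁.surjective
  set vfun : Fin k → ↥V := fun j => vd ((bW.coord j).toAddMonoidHom) with hvfun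
  have hdual : ∀ j (w : ↥Wsub), M.lam ((vfun j : X)) (w : Y) = bW.coord j w := by
    intro j w
    have := congrArg (fun φ : ↥Wsub →+ ℤ => φ w) (hvd ((bW.coord j).toAddMonoidHom))
    simpa using this
  set bb : Fin g → ZMod 2 :=
    ∑ j, (M.qf y ((bW j : Y))).val • (fun l => ((M.bX.repr ((vfun j : X)) l : ℤ) : ZMod 2))
    with hbb
  refine ⟨bb, ?_⟩
  intro w hw
  have hqb : M.qf (torHom M bb) w
      = ∑ j, (M.qf y ((bW j : Y))).val • ((M.lam ((vfun j : X)) w : ℤ) : ZMod 2) := by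
    rw [hbb, map_sum, map_sum, AddMonoidHom.finset_sum_apply]
    apply Finset.sum_congr rfl
    intro j _
    rw [map_nsmul, map_nsmul, AddMonoidHom.nsmul_apply, q_beta]
  rw [hqb]
  -- expand w in the basis bW
  have hwexp : (⟨w, hw⟩ : ↥Wsub) = ∑ j, bW.equivFun ⟨w, hw⟩ j • bW j := (bW.sum_equivFun _).symm
  have hw2 : w = ∑ j, bW.equivFun ⟨w, hw⟩ j • ((bW j : Y)) := by
    have := congrArg (fun u : ↥Wsub => (u : Y)) hwexp
    refine this.trans ?_
    rw [AddSubgroup.val_finsetSum]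
    rfl
  have hrhs : M.qf y w = ∑ j, bW.equivFun ⟨w, hw⟩ j • M.qf y ((bW j : Y)) := by
    conv_lhs => rw [hw2]
    rw [map_sum]
    apply Finset.sum_congr rfl
    intro j _
    rw [map_zsmul]
  have hlhsj : ∀ j, M.lam ((vfun j : X)) w = bW.equivFun ⟨w, hw⟩ j := by
    intro j
    conv_lhs => rw [hw2]
    rw [map_sum]
    have : ∀ j', M.lam ((vfun j : X)) (bW.equivFun ⟨w, hw⟩ j' • ((bW j' : Y)))
        = bW.equivFun ⟨w, hw⟩ j' * (if j = j' then 1 else 0) := by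
      intro j'
      rw [map_zsmul, hdual j (bW j'), smul_eq_mul]
      congr 1
      rw [Basis.coord_apply, Basis.repr_self, Finsupp.single_apply]
      simp [eq_comm]
    rw [Finset.sum_congr rfl (fun j' _ => this j')]
    simp [Finset.sum_ite_eq]
  rw [hrhs]
  apply Finset.sum_congr rfl
  intro j _
  rw [hlhsj j, val_smul]
  rw [zsmul_eq_mul]
  push_cast
  ring

end Tor

section YSide
variable (V : AddSubgroup X) (Wsub : AddSubgroup Y)

/-- `y ↦ λ(·,y)|_V` as a hom -/
def YtoV : Y →+ (↥V →+ ℤ) :=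
  AddMonoidHom.mk' (fun y => (M.lam.flip y).comp V.subtype)
    (by intro a b; ext v; simp)

/-- `w ↦ λ(·,w)|_V` restricted to W -/
def WtoV : ↥Wsub →+ (↥V →+ ℤ) :=
  AddMonoidHom.mk' (fun w => (M.lam.flip (w : Y)).comp V.subtype)
    (by intro a b; ext v; simp)

variable (hperf₂ : Function.Bijective fun w : Wsub => (M.lam.flip (w : Y)).comp V.subtype)

/-- the equivalence `W ≃ Hom(V,ℤ)` -/
noncomputable def PsiE : ↥Wsub ≃+ (↥V →+ ℤ) :=
  AddEquiv.ofBijective (WtoV M V Wsub) hperf₂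

/-- projection of `Y` onto `W` along `V^⊥` -/
noncomputable def pW : Y →+ ↥Wsub :=
  ((PsiE M V Wsub hperf₂).symm.toAddMonoidHom).comp (YtoV M V)

lemma pW_spec (y : Y) (v : X) (hv : v ∈ V) :
    M.lam v ((pW M V Wsub hperf₂ y : Y)) = M.lam v y := by
  have h : PsiE M V Wsub hperf₂ ((PsiE M V Wsub hperf₂).symm (YtoV M V y))
      = YtoV M V y := (PsiE M V Wsub hperf₂).apply_symm_apply _
  exact congrArg (fun φ : ↥V →+ ℤ => φ ⟨v, hv⟩) h

lemma sub_pW_mem (y : Y) : y - ((pW M V Wsub hperf₂ y : Y)) ∈ lamPerpY M.lam V := by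
  intro v hv
  simp [pW_spec M V Wsub hperf₂ y v hv]

variable (hperf₁ : Function.Bijective fun v : V => (M.lam (v : X)).comp Wsub.subtype)

/-- projection of `X` onto `W^⊥` -/
noncomputable def pP : X →+ ↥(lamPerpX M.lam Wsub) :=
  AddMonoidHom.mk' (fun x => ⟨x - (pV M V Wsub hperf₁ x : X), sub_pV_mem M V Wsub hperf₁ x⟩)
    (by intro a b
        apply Subtype.ext
        show (a + b) - _ = (a - _) + (b - _)
        rw [map_add]
        push_cast
        abel)

lemma pP_on_P (p : ↥(lamPerpX M.lam Wsub)) : pP M V Wsub hperf₁ (p : X) = p := by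
  apply Subtype.ext
  show (p : X) - _ = (p : X)
  rw [pV_perp M V Wsub hperf₁ _ p.2]
  simp

lemma pP_on_V (v : ↥V) : pP M V Wsub hperf₁ (v : X) = 0 := by
  apply Subtype.ext
  show (v : X) - _ = 0
  rw [pV_on_V M V Wsub hperf₁ v]
  simp

lemma exists_dual_in_Y' {k : ℕ} (bW : Basis (Fin k) ℤ ↥Wsub)
    (hperf₁ : Function.Bijective fun v : V => (M.lam (v : X)).comp Wsub.subtype)
    (f : X →+ ℤ) (hfV : ∀ v ∈ V, f v = 0) :
    ∃ u : Y, u ∈ (lamPerpY M.lam V) ⊓ (qPerp M.qf Wsub) ∧ ∀ x : X, M.lam x u = f x := by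
  set u0 : Y := M.eY (fun l => f (M.bX l), 0) with hu0def
  have hu0 : ∀ x, M.lam x u0 = f x := by
    have := homX_ext M ((M.lam.flip) u0) f
      (by intro i
          show M.lam (M.bX i) u0 = f (M.bX i)
          rw [lam_repr, hu0def, ca_eY])
    intro x
    exact congrArg (fun φ : X →+ ℤ => φ x) this
  obtain ⟨b, hb⟩ := exists_tor_fix M V Wsub bW hperf₁ u0
  refine ⟨u0 - torHom M b, ?_, ?_⟩
  · rw [AddSubgroup.mem_inf]
    constructor
    · intro v hv
      rw [map_sub, hu0 v, hfV v hv, torHom_apply, lam_tor]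
      simp
    · intro w hw
      have : M.qf (u0 - torHom M b) w = M.qf u0 w - M.qf (torHom M b) w := by
        rw [map_sub]
        simp
      rw [this, hb w hw, sub_self]
  · intro x
    rw [map_sub, hu0 x, torHom_apply, lam_tor]
    simp

end YSide

section UZ
variable (V : AddSubgroup X) (Wsub : AddSubgroup Y)

/-- mod-2 coordinate vector of a basis element of `W^⊥` -/
noncomputable def bzv {m : ℕ} (bP : Basis (Fin m) ℤ ↥(lamPerpX M.lam Wsub)) (j : Fin m) : Fin g → ZMod 2 :=
  fun l => ((M.bX.repr ((bP j : X)) l : ℤ) : ZMod 2)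

lemma q_zel {m : ℕ} (bP : Basis (Fin m) ℤ ↥(lamPerpX M.lam Wsub)) (j : Fin m) (y : Y) :
    M.qf (torHom M (bzv M Wsub bP j)) y = ((M.lam ((bP j : X)) y : ℤ) : ZMod 2) :=
  q_beta M _ y

lemma zel_mem {m : ℕ} (bP : Basis (Fin m) ℤ ↥(lamPerpX M.lam Wsub)) (j : Fin m) :
    torHom M (bzv M Wsub bP j) ∈ (lamPerpY M.lam V) ⊓ (qPerp M.qf Wsub) := by
  rw [AddSubgroup.mem_inf]
  constructor
  · intro v hv
    rw [torHom_apply, lam_tor]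
  · intro w hw
    rw [q_zel, (bP j).2 w hw]
    simp

/-- `q(torHom (∑ dⱼ • bzvⱼ), y)` expansion -/
lemma q_torsum {m : ℕ} (bP : Basis (Fin m) ℤ ↥(lamPerpX M.lam Wsub))
    (d : Fin m → ℕ) (y : Y) :
    M.qf (torHom M (∑ j, d j • bzv M Wsub bP j)) y
      = ∑ j, d j • ((M.lam ((bP j : X)) y : ℤ) : ZMod 2) := by
  rw [map_sum, map_sum, AddMonoidHom.finset_sum_apply]
  apply Finset.sum_congr rfl
  intro j _
  rw [map_nsmul, map_nsmul, AddMonoidHom.nsmul_apply, q_zel]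

lemma torsum_mem {m : ℕ} (bP : Basis (Fin m) ℤ ↥(lamPerpX M.lam Wsub)) (d : Fin m → ℕ) :
    torHom M (∑ j, d j • bzv M Wsub bP j) ∈ (lamPerpY M.lam V) ⊓ (qPerp M.qf Wsub) := by
  rw [map_sum]
  apply AddSubgroup.sum_mem
  intro j _
  rw [map_nsmul]
  exact AddSubgroup.nsmul_mem _ (zel_mem M V Wsub bP j) _

lemma cast_repr_basis {m : ℕ} (bP : Basis (Fin m) ℤ ↥(lamPerpX M.lam Wsub)) (i j : Fin m) :
    bP.repr (bP i) j = if i = j then 1 else 0 := by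
  rw [Basis.repr_self, Finsupp.single_apply]

lemma exists_u {k m : ℕ} (bW : Basis (Fin k) ℤ ↥Wsub)
    (hperf₁ : Function.Bijective fun v : V => (M.lam (v : X)).comp Wsub.subtype)
    (bP : Basis (Fin m) ℤ ↥(lamPerpX M.lam Wsub)) :
    ∃ u : Fin m → Y,
      (∀ j, u j ∈ (lamPerpY M.lam V) ⊓ (qPerp M.qf Wsub)) ∧
      (∀ (p : ↥(lamPerpX M.lam Wsub)) (j : Fin m), M.lam (p : X) (u j) = bP.repr p j) ∧
      (∀ i j, M.qf (u i) (u j) = 0) ∧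
      (∀ j, M.alpha (u j) = 0) := by
  classical
  have hvc : ∀ c : ZMod 2, ((c.val : ℕ) : ZMod 2) = c := by
    intro c; rw [ZMod.natCast_val, ZMod.cast_id]
  -- step 1 : λ-dual elements
  have hdual0 : ∀ j : Fin m, ∃ u0 : Y,
      u0 ∈ (lamPerpY M.lam V) ⊓ (qPerp M.qf Wsub) ∧
      ∀ x : X, M.lam x u0 = ((bP.coord j).toAddMonoidHom).comp (pP M V Wsub hperf₁) x := by
    intro j
    apply exists_dual_in_Y' M V Wsub bW hperf₁
    intro v hv
    show bP.coord j (pP M V Wsub hperf₁ v) = 0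
    rw [pP_on_V M V Wsub hperf₁ ⟨v, hv⟩]
    simp
  choose u0 hmem0 hlam0 using hdual0
  have hlam0' : ∀ (p : ↥(lamPerpX M.lam Wsub)) (j : Fin m),
      M.lam (p : X) (u0 j) = bP.repr p j := by
    intro p j
    rw [hlam0 j]
    show bP.coord j (pP M V Wsub hperf₁ (p : X)) = _
    rw [pP_on_P M V Wsub hperf₁ p, Basis.coord_apply]
  -- step 2 : correction coefficients
  set dmat : Fin m → Fin m → ℕ := fun i j =>
    if i = j then (∑ l, rho M (u0 i) l * cb M (u0 i) l).val
    else if i < j then (M.qf (u0 i) (u0 j)).val else 0 with hdmat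
  set wcor : Fin m → Y := fun i => torHom M (∑ j, dmat i j • bzv M Wsub bP j) with hwcor
  have hqw : ∀ (i : Fin m) (y : Y),
      M.qf (wcor i) y = ∑ j, dmat i j • ((M.lam ((bP j : X)) y : ℤ) : ZMod 2) :=
    fun i y => q_torsum M Wsub bP (dmat i) y
  have hqwu : ∀ i j, M.qf (wcor i) (u0 j) = ((dmat i j : ℕ) : ZMod 2) := by
    intro i j
    rw [hqw]
    have hterm : ∀ j', dmat i j' • ((M.lam ((bP j' : X)) (u0 j) : ℤ) : ZMod 2)
        = if j' = j then ((dmat i j' : ℕ) : ZMod 2) else 0 := by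
      intro j'
      rw [hlam0' (bP j') j, cast_repr_basis M Wsub bP j' j]
      split
      · simp [nsmul_eq_mul]
      · simp
    rw [Finset.sum_congr rfl (fun j' _ => hterm j')]
    simp
  have hqww : ∀ i j, M.qf (wcor i) (wcor j) = 0 := by
    intro i j
    rw [hqw]
    apply Finset.sum_eq_zero
    intro j' _
    have : M.lam ((bP j' : X)) (wcor j) = 0 := by
      rw [hwcor]
      show M.lam _ (torHom M _) = 0
      rw [torHom_apply, lam_tor]
    rw [this]
    simp
  have hwmem : ∀ i, wcor i ∈ (lamPerpY M.lam V) ⊓ (qPerp M.qf Wsub) := by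
    intro i
    rw [hwcor]
    exact torsum_mem M V Wsub bP (dmat i)
  have halw : ∀ i, M.alpha (wcor i) = 0 := by
    intro i
    rw [hwcor]
    show M.alpha (torHom M _) = 0
    rw [torHom_apply]
    exact alpha_tor M _
  refine ⟨fun i => u0 i + wcor i, ?_, ?_, ?_, ?_⟩
  · intro j
    exact AddSubgroup.add_mem _ (hmem0 j) (hwmem j)
  · intro p j
    rw [map_add, hlam0' p j]
    have : M.lam (p : X) (wcor j) = 0 := by
      rw [hwcor]
      show M.lam _ (torHom M _) = 0
      rw [torHom_apply, lam_tor]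
    rw [this, add_zero]
  · intro i j
    have expand : M.qf (u0 i + wcor i) (u0 j + wcor j)
        = M.qf (u0 i) (u0 j) + (((dmat j i : ℕ) : ZMod 2) + ((dmat i j : ℕ) : ZMod 2)) := by
      simp only [map_add, AddMonoidHom.add_apply]
      rw [M.qf_symm (u0 i) (wcor j), hqwu j i, hqwu i j, hqww i j]
      abel
    rw [expand]
    rcases lt_trichotomy i j with h | h | h
    · have h1 : dmat i j = (M.qf (u0 i) (u0 j)).val := by
        simp only [hdmat]
        rw [if_neg (ne_of_lt h), if_pos h]
      have h2 : dmat j i = 0 := by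
        simp only [hdmat]
        rw [if_neg (ne_of_gt h), if_neg (by omega : ¬ j < i)]
      rw [h1, h2, hvc, Nat.cast_zero, zero_add, two_eq_zero]
    · subst h
      have h1 : dmat i i = (∑ l, rho M (u0 i) l * cb M (u0 i) l).val := by
        simp only [hdmat]
        simp
      rw [h1, hvc, q_alt, zero_add, two_eq_zero]
    · have h1 : dmat i j = 0 := by
        simp only [hdmat]
        rw [if_neg (ne_of_gt h), if_neg (by omega : ¬ i < j)]
      have h2 : dmat j i = (M.qf (u0 j) (u0 i)).val := by
        simp only [hdmat]
        rw [if_neg (ne_of_lt h), if_pos h]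
      rw [h1, h2, hvc, Nat.cast_zero, add_zero, M.qf_symm (u0 j) (u0 i), two_eq_zero]
  · intro i
    rw [M.alpha_add, halw i, add_zero, M.qf_symm, hqwu i i]
    have h1 : dmat i i = (∑ l, rho M (u0 i) l * cb M (u0 i) l).val := by
      simp only [hdmat]
      simp
    rw [h1, hvc, alpha_formula M (u0 i), ← map_add, two_eq_zero, map_zero]

end UZ

section Key
variable (V : AddSubgroup X) (Wsub : AddSubgroup Y)

lemma tor_zero {m : ℕ}
    (hperf₁ : Function.Bijective fun v : V => (M.lam (v : X)).comp Wsub.subtype)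
    (hperf₂ : Function.Bijective fun w : Wsub => (M.lam.flip (w : Y)).comp V.subtype)
    (bP : Basis (Fin m) ℤ ↥(lamPerpX M.lam Wsub))
    (u : Fin m → Y)
    (humem : ∀ j, u j ∈ (lamPerpY M.lam V))
    (hulam : ∀ (p : ↥(lamPerpX M.lam Wsub)) (j : Fin m), M.lam (p : X) (u j) = bP.repr p j)
    (e : Fin g → ZMod 2)
    (hW : ∀ w ∈ Wsub, M.qf (torHom M e) w = 0)
    (hU : ∀ i, M.qf (torHom M e) (u i) = 0) :
    e = 0 := by
  classical
  have hall : ∀ y : Y, M.qf (torHom M e) y = 0 := by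
    intro y
    set w : Y := ((pW M V Wsub hperf₂ y : Y)) with hw
    set yv : Y := y - w with hyv
    have hyvmem : yv ∈ lamPerpY M.lam V := sub_pW_mem M V Wsub hperf₂ y
    set c : Fin m → ℤ := fun j => M.lam ((bP j : X)) yv with hc
    set y1 : Y := yv - ∑ j, c j • u j with hy1
    -- λ(x, y1) = 0 for all x
    have hy1lam : ∀ x : X, M.lam x y1 = 0 := by
      intro x
      have hx : x = ((pV M V Wsub hperf₁ x : X)) + (x - ((pV M V Wsub hperf₁ x : X))) := by
        abel
      have hsum : ∀ j, M.lam x (c j • u j) = c j • M.lam x (u j) := fun j => map_zsmul _ _ _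
      have hVpart : ∀ v ∈ V, M.lam v y1 = 0 := by
        intro v hv
        rw [hy1, map_sub, hyvmem v hv, map_sum, zero_sub, neg_eq_zero]
        apply Finset.sum_eq_zero
        intro j _
        rw [map_zsmul, humem j v hv, smul_zero]
      have hPpart : ∀ p : ↥(lamPerpX M.lam Wsub), M.lam (p : X) y1 = 0 := by
        intro p
        rw [hy1, map_sub, map_sum]
        have h1 : M.lam ((p : X)) yv = ∑ j, bP.equivFun p j • c j := by
          have hpexp : (p : X) = ∑ j, bP.equivFun p j • ((bP j : X)) := by
            have := congrArg (fun q : ↥(lamPerpX M.lam Wsub) => (q : X)) (bP.sum_equivFun p).symm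
            rw [this, AddSubgroup.val_finsetSum]
            rfl
          conv_lhs => rw [hpexp]
          rw [map_sum, AddMonoidHom.finset_sum_apply]
          apply Finset.sum_congr rfl
          intro j _
          rw [map_zsmul, AddMonoidHom.smul_apply, hc]
        have h2 : ∀ j, M.lam ((p : X)) (c j • u j) = c j * bP.repr p j := by
          intro j
          rw [map_zsmul, hulam p j, smul_eq_mul]
        rw [h1, Finset.sum_congr rfl (fun j _ => h2 j)]
        rw [sub_eq_zero]
        apply Finset.sum_congr rfl
        intro j _
        rw [smul_eq_mul, mul_comm]
        congr 1
      rw [hx, map_add, AddMonoidHom.add_apply,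
        hVpart _ (pV M V Wsub hperf₁ x).2,
        hPpart ⟨x - ((pV M V Wsub hperf₁ x : X)), sub_pV_mem M V Wsub hperf₁ x⟩, add_zero]
    have hca : ca M y1 = 0 := by
      funext i
      rw [← lam_repr, hy1lam (M.bX i)]
      rfl
    have hy1tor : y1 = torHom M (cb M y1) := by
      rw [torHom_apply, ← eY_coords M y1, hca]
      simp [ca, cb]
    have hydecomp : y = w + (∑ j, c j • u j) + y1 := by
      rw [hy1, hyv]
      abel
    rw [hydecomp, map_add, map_add, hW w (pW M V Wsub hperf₂ y).2, map_sum]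
    rw [hy1tor, torHom_apply, torHom_apply, q_tor_tor]
    have : ∀ j, M.qf (M.eY (0, e)) (c j • u j) = 0 := by
      intro j
      rw [map_zsmul]
      have := hU j
      rw [torHom_apply] at this
      rw [this, smul_zero]
    rw [Finset.sum_congr rfl (fun j _ => this j)]
    simp
  funext l
  have := hall (M.eY (Pi.single l 1, 0))
  rw [torHom_apply, q_tor_formula] at this
  have hterm : ∀ m', e m' * rho M (M.eY (Pi.single l 1, 0)) m'
      = if m' = l then e m' else 0 := by
    intro m'
    rw [rho, ca_eY]
    simp only [Pi.single_apply]
    split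
    · simp
    · simp
  rw [Finset.sum_congr rfl (fun m' _ => hterm m')] at this
  simp at this
  rw [this]
  rfl

end Key

end WallAux

open WallAux

/-- If `V ⊆ X` and `W ⊆ Y` are free rank-`k` direct summands (`k > 0`) such
that the restriction of `λ` to `V × W` is a perfect pairing, then `(W^⊥, V^⊥ ∩ Ŵ)` with the
restrictions of `λ`, `q`, `α` (and the same `∂`) is a Wall pairing of rank `g - k`. -/
theorem wallPairing_complement {g : ℕ} {X Y A : Type} [AddCommGroup X] [AddCommGroup Y]
    [AddCommGroup A] (W : WallPairing g X Y A) (k : ℕ) (hk : 0 < k)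
    (V : AddSubgroup X) (Wsub : AddSubgroup Y)
    (hVfree : Nonempty (Module.Basis (Fin k) ℤ V)) (hVsum : ∃ C : AddSubgroup X, IsCompl V C)
    (hWfree : Nonempty (Module.Basis (Fin k) ℤ Wsub)) (hWsum : ∃ C : AddSubgroup Y, IsCompl Wsub C)
    (hperf₁ : Function.Bijective fun v : V => (W.lam (v : X)).comp Wsub.subtype)
    (hperf₂ : Function.Bijective fun w : Wsub => (W.lam.flip (w : Y)).comp V.subtype) :
    ∃ W' : WallPairing (g - k) (lamPerpX W.lam Wsub)
        (↥((lamPerpY W.lam V) ⊓ (qPerp W.qf Wsub))) A,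
      W'.bd = W.bd ∧
      (∀ (a : lamPerpX W.lam Wsub) (b : ↥((lamPerpY W.lam V) ⊓ (qPerp W.qf Wsub))),
        W'.lam a b = W.lam (a : X) (b : Y)) ∧
      (∀ b b' : ↥((lamPerpY W.lam V) ⊓ (qPerp W.qf Wsub)),
        W'.qf b b' = W.qf (b : Y) (b' : Y)) ∧
      (∀ b : ↥((lamPerpY W.lam V) ⊓ (qPerp W.qf Wsub)), W'.alpha b = W.alpha (b : Y)) := by
  classical
  obtain ⟨bV⟩ := hVfree
  obtain ⟨bW⟩ := hWfree
  obtain ⟨bP⟩ := exists_perp_basis W V Wsub hperf₁ bV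
  obtain ⟨u, humem, hulam, hquu, halu⟩ := exists_u W V Wsub bW hperf₁ bP
  set Ysub : AddSubgroup Y := (lamPerpY W.lam V) ⊓ (qPerp W.qf Wsub) with hYsub
  have hvc : ∀ c : ZMod 2, ((c.val : ℕ) : ZMod 2) = c := by
    intro c; rw [ZMod.natCast_val, ZMod.cast_id]
  -- the free-part and torsion-part homs
  set FH : (Fin (g-k) → ℤ) →+ Y := AddMonoidHom.mk' (fun c => ∑ j, c j • u j)
    (by intro a b
        rw [← Finset.sum_add_distrib]
        apply Finset.sum_congr rfl
        intro j _
        rw [Pi.add_apply, add_smul]) with hFH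
  set TH : (Fin (g-k) → ZMod 2) →+ Y :=
    AddMonoidHom.mk' (fun d => torHom W (∑ j, (d j).val • bzv W Wsub bP j))
    (by intro a b
        rw [← map_add, ← Finset.sum_add_distrib]
        congr 1
        apply Finset.sum_congr rfl
        intro j _
        rw [Pi.add_apply, val_smul_add]
        funext l
        exact two_eq_zero _) with hTH
  have hFHval : ∀ c, FH c = ∑ j, c j • u j := fun c => rfl
  have hTHval : ∀ d, TH d = torHom W (∑ j, (d j).val • bzv W Wsub bP j) := fun d => rfl
  -- membership
  have hFHmem : ∀ c, FH c ∈ Ysub := by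
    intro c
    rw [hFHval]
    apply AddSubgroup.sum_mem
    intro j _
    exact AddSubgroup.zsmul_mem _ (humem j) _
  have hTHmem : ∀ d, TH d ∈ Ysub := by
    intro d
    rw [hTHval]
    exact torsum_mem W V Wsub bP _
  have hFmem : ∀ p : (Fin (g-k) → ℤ) × (Fin (g-k) → ZMod 2), (FH.coprod TH) p ∈ Ysub := by
    intro p
    rw [AddMonoidHom.coprod_apply]
    exact AddSubgroup.add_mem _ (hFHmem p.1) (hTHmem p.2)
  set F : ((Fin (g-k) → ℤ) × (Fin (g-k) → ZMod 2)) →+ ↥Ysub :=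
    (FH.coprod TH).codRestrict Ysub hFmem with hF
  have hFval : ∀ p, ((F p : Y)) = FH p.1 + TH p.2 := fun p => rfl
  -- evaluation lemmas
  have hlamFH : ∀ (i : Fin (g-k)) (c : Fin (g-k) → ℤ), W.lam ((bP i : X)) (FH c) = c i := by
    intro i c
    rw [hFHval, map_sum]
    have hterm : ∀ j, W.lam ((bP i : X)) (c j • u j) = if i = j then c j else 0 := by
      intro j
      rw [map_zsmul, hulam (bP i) j, cast_repr_basis W Wsub bP i j]
      split
      · simp
      · simp
    rw [Finset.sum_congr rfl (fun j _ => hterm j)]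
    simp
  have hlamTH : ∀ (x : X) (d : Fin (g-k) → ZMod 2), W.lam x (TH d) = 0 := by
    intro x d
    rw [hTHval, torHom_apply, lam_tor]
  have hqTHu : ∀ (d : Fin (g-k) → ZMod 2) (i : Fin (g-k)), W.qf (TH d) (u i) = d i := by
    intro d i
    rw [hTHval, q_torsum]
    have hterm : ∀ j, (d j).val • ((W.lam ((bP j : X)) (u i) : ℤ) : ZMod 2)
        = if j = i then d j else 0 := by
      intro j
      rw [hulam (bP j) i, cast_repr_basis W Wsub bP j i]
      split
      · rw [val_smul]
        simp
      · simp
    rw [Finset.sum_congr rfl (fun j _ => hterm j)]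
    simp
  have hquz : ∀ i j, W.qf (u i) (torHom W (bzv W Wsub bP j)) = if i = j then 1 else 0 := by
    intro i j
    rw [W.qf_symm, q_zel, hulam (bP j) i, cast_repr_basis W Wsub bP j i]
    by_cases h : i = j
    · subst h
      simp
    · rw [if_neg (fun hh => h hh.symm), if_neg h]
      simp
  -- bijectivity of F
  have hFbij : Function.Bijective F := by
    constructor
    · rw [injective_iff_map_eq_zero]
      intro p hp
      have hval : FH p.1 + TH p.2 = 0 := by
        have := congrArg (fun z : ↥Ysub => (z : Y)) hp
        simpa [hFval] using this
      have hc : p.1 = 0 := by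
        funext i
        have := congrArg (W.lam ((bP i : X))) hval
        rw [map_add, hlamFH, hlamTH, add_zero, map_zero] at this
        exact this
      have hTH0 : TH p.2 = 0 := by
        rw [hc] at hval
        rw [map_zero, zero_add] at hval
        exact hval
      have hd : p.2 = 0 := by
        funext i
        have := congrArg (fun y : Y => W.qf y (u i)) hTH0
        rw [hqTHu, map_zero] at this
        exact this.trans (by simp)
      exact Prod.ext hc hd
    · intro yS
      obtain ⟨hySV, hySQ⟩ := AddSubgroup.mem_inf.mp yS.2
      set c : Fin (g-k) → ℤ := fun j => W.lam ((bP j : X)) (yS : Y) with hc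
      set y1 : Y := (yS : Y) - FH c with hy1
      have hy1mem : y1 ∈ Ysub := AddSubgroup.sub_mem _ yS.2 (hFHmem c)
      obtain ⟨hy1V, hy1Q⟩ := AddSubgroup.mem_inf.mp hy1mem
      -- λ(x, y1) = 0 for all x
      have hy1lam : ∀ x : X, W.lam x y1 = 0 := by
        intro x
        have hx : x = ((pV W V Wsub hperf₁ x : X)) + (x - ((pV W V Wsub hperf₁ x : X))) := by
          abel
        have hPpart : ∀ p : ↥(lamPerpX W.lam Wsub), W.lam (p : X) y1 = 0 := by
          intro p
          rw [hy1, map_sub]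
          have h1 : W.lam ((p : X)) ((yS : Y)) = ∑ j, bP.equivFun p j • c j := by
            have hpexp : (p : X) = ∑ j, bP.equivFun p j • ((bP j : X)) := by
              have := congrArg (fun q : ↥(lamPerpX W.lam Wsub) => (q : X)) (bP.sum_equivFun p).symm
              rw [this, AddSubgroup.val_finsetSum]
              rfl
            conv_lhs => rw [hpexp]
            rw [map_sum, AddMonoidHom.finset_sum_apply]
            apply Finset.sum_congr rfl
            intro j _
            rw [map_zsmul, AddMonoidHom.smul_apply, hc]
          have h2 : W.lam ((p : X)) (FH c) = ∑ j, c j • bP.repr p j := by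
            rw [hFHval, map_sum]
            apply Finset.sum_congr rfl
            intro j _
            rw [map_zsmul, hulam p j]
          rw [h1, h2, sub_eq_zero]
          apply Finset.sum_congr rfl
          intro j _
          rw [smul_eq_mul, smul_eq_mul, mul_comm]
          congr 1
        rw [hx, map_add, AddMonoidHom.add_apply,
          hy1V _ (pV W V Wsub hperf₁ x).2,
          hPpart ⟨x - ((pV W V Wsub hperf₁ x : X)), sub_pV_mem W V Wsub hperf₁ x⟩, add_zero]
      have hca : ca W y1 = 0 := by
        funext i
        rw [← lam_repr, hy1lam (W.bX i)]
        rfl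
      have hy1tor : y1 = torHom W (cb W y1) := by
        rw [torHom_apply, ← eY_coords W y1, hca]
        simp [ca, cb]
      set d : Fin (g-k) → ZMod 2 := fun i => W.qf y1 (u i) with hd
      set e : Fin g → ZMod 2 := cb W y1 - ∑ j, (d j).val • bzv W Wsub bP j with he
      have hTHde : torHom W e = y1 - TH d := by
        rw [he, map_sub, ← hy1tor, hTHval]
      have he0 : e = 0 := by
        apply tor_zero W V Wsub hperf₁ hperf₂ bP u
          (fun j => (AddSubgroup.mem_inf.mp (humem j)).1) hulam
        · intro w hw
          rw [hTHde, map_sub, AddMonoidHom.sub_apply, hy1Q w hw]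
          have : W.qf (TH d) w = 0 := (AddSubgroup.mem_inf.mp (hTHmem d)).2 w hw
          rw [this, sub_zero]
        · intro i
          rw [hTHde, map_sub, AddMonoidHom.sub_apply, hqTHu, hd]
          exact sub_self _
      have hy1d : y1 = TH d := by
        have h0 : torHom W e = 0 := by rw [he0, map_zero]
        rw [h0] at hTHde
        exact sub_eq_zero.mp hTHde.symm
      refine ⟨(c, d), ?_⟩
      apply Subtype.ext
      rw [hFval]
      show FH c + TH d = (yS : Y)
      rw [← hy1d, hy1]
      abel
  set eY' := AddEquiv.ofBijective F hFbij with heY'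
  have heY'val : ∀ p, ((eY' p : Y)) = FH p.1 + TH p.2 := fun p => rfl
  -- generator images
  have hgen1 : ∀ j, ((eY' (Pi.single j 1, 0) : Y)) = u j := by
    intro j
    rw [heY'val]
    have h1 : FH (Pi.single j 1) = u j := by
      rw [hFHval]
      have hterm : ∀ i, (Pi.single j 1 : Fin (g-k) → ℤ) i • u i = if i = j then u i else 0 := by
        intro i
        rw [Pi.single_apply]
        split
        · simp
        · simp
      rw [Finset.sum_congr rfl (fun i _ => hterm i)]
      simp
    rw [h1, map_zero, add_zero]
  have hgen2 : ∀ j, ((eY' (0, Pi.single j 1) : Y)) = torHom W (bzv W Wsub bP j) := by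
    intro j
    rw [heY'val]
    have h1 : TH (Pi.single j 1) = torHom W (bzv W Wsub bP j) := by
      rw [hTHval]
      congr 1
      have hterm : ∀ i, ((Pi.single j 1 : Fin (g-k) → ZMod 2) i).val • bzv W Wsub bP i
          = if i = j then bzv W Wsub bP i else 0 := by
        intro i
        rw [Pi.single_apply]
        split
        · simp [ZMod.val_one]
        · simp
      rw [Finset.sum_congr rfl (fun i _ => hterm i)]
      simp
    rw [h1, map_zero, zero_add]
  -- assemble the structure
  refine ⟨{
    lam := AddMonoidHom.mk' (fun p => (W.lam ((p : X))).comp Ysub.subtype)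
      (by intro a b; ext y; simp),
    qf := AddMonoidHom.mk' (fun y => (W.qf ((y : Y))).comp Ysub.subtype)
      (by intro a b; ext y; simp),
    qf_symm := by
      intro a b
      exact W.qf_symm _ _,
    bd := W.bd,
    alpha := fun y => W.alpha ((y : Y)),
    alpha_add := by
      intro a b
      exact W.alpha_add _ _,
    bX := bP,
    eY := eY',
    lam_xy := by
      intro i j
      show W.lam ((bP i : X)) ((eY' (Pi.single j 1, 0) : Y)) = _
      rw [hgen1 j, hulam (bP i) j, cast_repr_basis W Wsub bP i j],
    lam_xz := by
      intro i j
      show W.lam ((bP i : X)) ((eY' (0, Pi.single j 1) : Y)) = 0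
      rw [hgen2 j, torHom_apply, lam_tor],
    q_yz := by
      intro i j
      show W.qf ((eY' (Pi.single i 1, 0) : Y)) ((eY' (0, Pi.single j 1) : Y)) = _
      rw [hgen1 i, hgen2 j, hquz i j],
    q_yy := by
      intro i j
      show W.qf ((eY' (Pi.single i 1, 0) : Y)) ((eY' (Pi.single j 1, 0) : Y)) = 0
      rw [hgen1 i, hgen1 j, hquu i j],
    q_zz := by
      intro i j
      show W.qf ((eY' (0, Pi.single i 1) : Y)) ((eY' (0, Pi.single j 1) : Y)) = 0
      rw [hgen2 i, hgen2 j, q_zel]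
      rw [torHom_apply, lam_tor]
      simp,
    alpha_y := by
      intro i
      show W.alpha ((eY' (Pi.single i 1, 0) : Y)) = 0
      rw [hgen1 i]
      exact halu i,
    alpha_z := by
      intro i
      show W.alpha ((eY' (0, Pi.single i 1) : Y)) = 0
      rw [hgen2 i, torHom_apply]
      exact alpha_tor W _ }, rfl, ?_, ?_, ?_⟩
  · intro a b
    rfl
  · intro b b'
    rfl
  · intro b
    rfl
end

section
/- Let (X, Y, λ, q, α) be a Wall pairing of rank g, and let (y_1, …, y_g) be elements of Y spanning a free direct summand of rank g of Y, with α(y_i) = 0 and q(y_i, y_j) = 0 for all i, j. Then there exist a unique basis (x_1,…,x_g) of X and a unique basis (z_1,…,z_g) of Torsion(Y) such that for all i, j: λ(x_i, y_j) = δ_{ij}, λ(x_i, z_j) = 0, q(y_i, z_j) = δ_{ij}, q(z_i, z_j) = 0, and α(z_i) = 0. -/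
section WallAuxTest
open Matrix
variable {g : ℕ}

lemma zmod2_add_self (x : ZMod 2) : x + x = 0 := by revert x; decide

lemma zmod2_cast_val (x : ZMod 2) : ((x.val : ZMod 2)) = x := by
  rw [ZMod.natCast_val, ZMod.cast_id]

lemma sum_single_int (a : Fin g → ℤ) : ∑ l, a l • Pi.single l (1:ℤ) = a := by
  funext j
  simp [Finset.sum_apply, Pi.single_apply]

lemma val_smul_single (b : ZMod 2) (l : Fin g) :
    b.val • (Pi.single l 1 : Fin g → ZMod 2) = Pi.single l b := by
  funext j
  rcases eq_or_ne j l with h | h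
  · subst h; simp [nsmul_eq_mul, zmod2_cast_val]
  · simp [Pi.single_apply, h]

lemma sum_single_zmod (b : Fin g → ZMod 2) :
    ∑ l, (b l).val • (Pi.single l 1 : Fin g → ZMod 2) = b := by
  simp only [val_smul_single]
  exact Finset.univ_sum_single b

lemma twosmul_zmodpi (b : Fin g → ZMod 2) : (2:ℕ) • b = 0 := by
  funext l
  show (2:ℕ) • b l = 0
  rw [two_nsmul, zmod2_add_self]

lemma twosmul_intpi (a : Fin g → ℤ) (h : (2:ℕ) • a = 0) : a = 0 := by
  funext l
  have := congrFun h l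
  simp only [Pi.smul_apply, two_nsmul, Pi.zero_apply] at this
  simp only [Pi.zero_apply]
  omega

variable {X Y A : Type} [AddCommGroup X] [AddCommGroup Y] [AddCommGroup A]
variable (W : WallPairing g X Y A)

/-- Decomposition of a general element of `Y` in terms of the standard generators. -/
lemma eY_decomp (a : Fin g → ℤ) (b : Fin g → ZMod 2) :
    W.eY (a, b) = (∑ l, a l • W.eY (Pi.single l 1, 0))
      + ∑ l, (b l).val • W.eY (0, Pi.single l 1) := by
  have h1 : ∑ l, a l • W.eY (Pi.single l 1, 0) = W.eY (a, 0) := by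
    simp only [← map_zsmul]
    rw [← map_sum]
    congr 1
    apply Prod.ext
    · rw [Prod.fst_sum]
      simp only [Prod.smul_fst]
      exact sum_single_int a
    · rw [Prod.snd_sum]
      simp only [Prod.smul_snd, smul_zero, Finset.sum_const_zero]
  have h2 : ∑ l, (b l).val • W.eY (0, Pi.single l 1) = W.eY (0, b) := by
    simp only [← map_nsmul]
    rw [← map_sum]
    congr 1
    apply Prod.ext
    · rw [Prod.fst_sum]
      simp only [Prod.smul_fst, smul_zero, Finset.sum_const_zero]
    · rw [Prod.snd_sum]
      simp only [Prod.smul_snd]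
      exact sum_single_zmod b
  rw [h1, h2, ← map_add]
  congr 1
  simp

/-- `eY (0, b)` is 2-torsion. -/
lemma eY_tors (b : Fin g → ZMod 2) : (2:ℕ) • W.eY (0, b) = 0 := by
  rw [← map_nsmul, ← map_zero W.eY]
  congr 1
  apply Prod.ext
  · show (2:ℕ) • (0 : Fin g → ℤ) = 0
    simp
  · show (2:ℕ) • b = 0
    exact twosmul_zmodpi b

/-- If `2 • w = 0` then the free part of `w` vanishes. -/
lemma free_part_of_tors (w : Y) (h : (2:ℕ) • w = 0) : (W.eY.symm w).1 = 0 := by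
  apply twosmul_intpi
  have : W.eY.symm ((2:ℕ) • w) = 0 := by rw [h]; simp
  rw [map_nsmul] at this
  calc (2:ℕ) • (W.eY.symm w).1 = ((2:ℕ) • W.eY.symm w).1 := rfl
  _ = 0 := by rw [this]; rfl

/-- Conversely, if the free part vanishes then `w` is 2-torsion. -/
lemma tors_of_free_part (w : Y) (h : (W.eY.symm w).1 = 0) : (2:ℕ) • w = 0 := by
  have hw : w = W.eY (0, (W.eY.symm w).2) := by
    conv_lhs => rw [← W.eY.apply_symm_apply w]
    congr 1
    exact Prod.ext h rfl
  rw [hw]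
  exact eY_tors W _

/-- `λ(x, w) = 0` for 2-torsion `w`. -/
lemma lam_tors (x : X) (w : Y) (h : (2:ℕ) • w = 0) : W.lam x w = 0 := by
  have : W.lam x ((2:ℕ) • w) = 0 := by rw [h]; simp
  rw [map_nsmul, two_nsmul] at this
  omega

/-- `λ(bX k, w)` computes the free part of `w`. -/
lemma lam_bX (k : Fin g) (w : Y) : W.lam (W.bX k) w = (W.eY.symm w).1 k := by
  conv_lhs => rw [← W.eY.apply_symm_apply w, eY_decomp]
  rw [map_add, map_sum, map_sum]
  simp only [map_zsmul, map_nsmul, W.lam_xy, W.lam_xz, smul_eq_mul, smul_zero,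
    Finset.sum_const_zero, add_zero, mul_ite, mul_one, mul_zero]
  simp [Finset.sum_ite_eq']

/-- `q(w, Z_j)` computes the free part of `w` mod 2. -/
lemma qf_w_z (w : Y) (j : Fin g) :
    W.qf w (W.eY (0, Pi.single j 1)) = ((W.eY.symm w).1 j : ZMod 2) := by
  conv_lhs => rw [← W.eY.apply_symm_apply w, eY_decomp]
  rw [map_add, map_sum, map_sum]
  simp only [AddMonoidHom.add_apply, AddMonoidHom.finset_sum_apply]
  simp only [map_zsmul, map_nsmul, AddMonoidHom.smul_apply]
  simp only [W.q_yz, W.q_zz, smul_zero, Finset.sum_const_zero, add_zero]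
  simp only [zsmul_eq_mul, mul_ite, mul_one, mul_zero]
  simp [Finset.sum_ite_eq]

/-- `q(eY(0,b), w)` as a sum over coordinates. -/
lemma qf_tors_w (b : Fin g → ZMod 2) (w : Y) :
    W.qf (W.eY (0, b)) w = ∑ l, b l * ((W.eY.symm w).1 l : ZMod 2) := by
  have hd : W.eY ((0 : Fin g → ℤ), b) = ∑ l, (b l).val • W.eY (0, Pi.single l 1) := by
    rw [eY_decomp]
    simp
  rw [hd, map_sum]
  simp only [AddMonoidHom.finset_sum_apply, map_nsmul, AddMonoidHom.nsmul_apply]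
  congr 1
  funext l
  rw [W.qf_symm, qf_w_z, nsmul_eq_mul, zmod2_cast_val]

lemma qf_tors_tors (b c : Fin g → ZMod 2) : W.qf (W.eY (0, b)) (W.eY (0, c)) = 0 := by
  rw [qf_tors_w]
  have : (W.eY.symm (W.eY ((0 : Fin g → ℤ), c))).1 = 0 := by simp
  rw [this]
  simp

lemma alpha_zero : W.alpha 0 = 0 := by
  have h := W.alpha_add 0 0
  have h2 : W.bd ((W.qf 0) 0) = 0 := by simp
  rw [add_zero, h2, add_zero] at h
  exact (add_eq_left.mp h.symm)

/-- `α` vanishes on the torsion subgroup. -/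
lemma alpha_tors (b : Fin g → ZMod 2) : W.alpha (W.eY (0, b)) = 0 := by
  have key : ∀ s : Finset (Fin g), ∀ c : Fin g → ZMod 2,
      W.alpha (W.eY (0, ∑ l ∈ s, Pi.single l (c l))) = 0 := by
    intro s
    induction s using Finset.induction_on with
    | empty => intro c; simp [alpha_zero, Prod.mk_zero_zero]
    | @insert a s ha ih =>
      intro c
      rw [Finset.sum_insert ha]
      have hsplit : W.eY ((0 : Fin g → ℤ), Pi.single a (c a) + ∑ l ∈ s, Pi.single l (c l))
          = W.eY (0, Pi.single a (c a)) + W.eY (0, ∑ l ∈ s, Pi.single l (c l)) := by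
        have hp : ((0 : Fin g → ℤ), Pi.single a (c a) + ∑ l ∈ s, Pi.single l (c l))
            = ((0 : Fin g → ℤ), Pi.single a (c a)) + (0, ∑ l ∈ s, Pi.single l (c l)) :=
          Prod.ext (by simp) rfl
        rw [hp, map_add]
      rw [hsplit, W.alpha_add, qf_tors_tors, map_zero, add_zero, ih c, add_zero]
      have hca : c a = 0 ∨ c a = 1 := by
        have := (c a).val_lt
        rcases h : (c a).val with _ | n
        · left; exact (ZMod.val_eq_zero _).mp h
        · right
          have hv : (c a).val = 1 := by omega
          calc c a = ((c a).val : ZMod 2) := (zmod2_cast_val _).symm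
          _ = 1 := by rw [hv]; norm_num
      rcases hca with h | h
      · rw [h]
        simp [alpha_zero, Prod.mk_zero_zero]
      · rw [h]
        exact W.alpha_z a
  have := key Finset.univ b
  rwa [Finset.univ_sum_single] at this

/-- Summation of torsion elements given by columns of a mod-2 matrix. -/
lemma sum_val_smul_col (c : Fin g → ZMod 2) (G : Matrix (Fin g) (Fin g) (ZMod 2)) :
    (∑ i, (c i).val • W.eY (0, fun l => G l i)) = W.eY (0, G *ᵥ c) := by
  simp only [← map_nsmul]
  rw [← map_sum]
  congr 1
  apply Prod.ext
  · rw [Prod.fst_sum]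
    simp only [Prod.smul_fst, smul_zero, Finset.sum_const_zero]
  · rw [Prod.snd_sum]
    simp only [Prod.smul_snd]
    funext l
    rw [Finset.sum_apply]
    simp only [Pi.smul_apply]
    rw [Matrix.mulVec, dotProduct]
    congr 1
    funext i
    rw [nsmul_eq_mul, zmod2_cast_val, mul_comm]

/-- additivity of the free part over `ℤ`-linear combinations -/
lemma free_part_sum {ι : Type} (s : Finset ι) (c : ι → ℤ) (w : ι → Y) :
    (W.eY.symm (∑ i ∈ s, c i • w i)).1 = ∑ i ∈ s, c i • (W.eY.symm (w i)).1 := by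
  rw [map_sum, Prod.fst_sum]
  congr 1
  funext i
  rw [map_zsmul, Prod.smul_fst]

lemma eq_tors_of_free_part (w : Y) (h : (W.eY.symm w).1 = 0) :
    w = W.eY (0, (W.eY.symm w).2) := by
  conv_lhs => rw [← W.eY.apply_symm_apply w]
  congr 1
  exact Prod.ext h rfl

lemma lam_sum_apply (c : Fin g → ℤ) (xv : Fin g → X) (w : Y) :
    W.lam (∑ k, c k • xv k) w = ∑ k, c k * W.lam (xv k) w := by
  rw [map_sum]
  simp only [AddMonoidHom.finset_sum_apply, map_zsmul, AddMonoidHom.smul_apply,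
    smul_eq_mul]

lemma coe_subgroup_sum {S : AddSubgroup Y} (c : Fin g → ℤ) (v : Fin g → S) :
    ((∑ i, c i • v i : S) : Y) = ∑ i, c i • (v i : Y) := by
  have : ((∑ i, c i • v i : S) : Y) = S.subtype (∑ i, c i • v i) := rfl
  rw [this, map_sum]
  simp only [map_zsmul]
  rfl

end WallAuxTest

open Matrix

/-- Given elements `(y_1,…,y_g)` of `Y` spanning a free rank-`g` direct summand
with `α(y_i) = 0` and `q(y_i,y_j) = 0`, there are a unique basis `(x_1,…,x_g)` of `X` and a
unique basis `(z_1,…,z_g)` of `Torsion(Y)` (an elementary abelian 2-group) with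
`λ(x_i,y_j) = δ_{ij}`, `λ(x_i,z_j) = 0`, `q(y_i,z_j) = δ_{ij}`, `q(z_i,z_j) = 0`, `α(z_i) = 0`. -/
theorem wallPairing_unique_complementary_bases {g : ℕ} {X Y A : Type} [AddCommGroup X]
    [AddCommGroup Y] [AddCommGroup A] (W : WallPairing g X Y A) (y : Fin g → Y)
    (hy_summand : ∃ S C : AddSubgroup Y, IsCompl S C ∧
      ∃ B : Module.Basis (Fin g) ℤ S, ∀ i, (B i : Y) = y i)
    (hy_alpha : ∀ i, W.alpha (y i) = 0) (hy_q : ∀ i j, W.qf (y i) (y j) = 0) :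
    ∃! p : (Fin g → X) × (Fin g → Y),
      (∃ B : Module.Basis (Fin g) ℤ X, ∀ i, B i = p.1 i) ∧
      (∀ i, p.2 i ∈ AddCommGroup.torsion Y) ∧
      (∀ i, 2 • p.2 i = 0) ∧
      (∀ t ∈ AddCommGroup.torsion Y, ∃ c : Fin g → ZMod 2,
        t = ∑ i : Fin g, (c i).val • p.2 i) ∧
      (∀ c : Fin g → ZMod 2, ∑ i : Fin g, (c i).val • p.2 i = 0 → c = 0) ∧
      (∀ i j, W.lam (p.1 i) (y j) = if i = j then 1 else 0) ∧
      (∀ i j, W.lam (p.1 i) (p.2 j) = 0) ∧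
      (∀ i j, W.qf (y i) (p.2 j) = if i = j then 1 else 0) ∧
      (∀ i j, W.qf (p.2 i) (p.2 j) = 0) ∧
      (∀ i, W.alpha (p.2 i) = 0) := by
  classical
  obtain ⟨S, C, hSC, B, hB⟩ := hy_summand
  set row : Fin g → (Fin g → ℤ) := fun i => (W.eY.symm (y i)).1 with hrowdef
  set M : Matrix (Fin g) (Fin g) ℤ := Matrix.of row with hMdef
  -- independence of the rows
  have hrow_indep : LinearIndependent ℤ row := by
    rw [Fintype.linearIndependent_iff]
    intro c hc
    have hfree : (W.eY.symm (∑ i, c i • y i)).1 = 0 := by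
      rw [free_part_sum]; exact hc
    have h2 : (2:ℕ) • (∑ i, c i • y i) = 0 := tors_of_free_part W _ hfree
    have hcoe : ((∑ i, c i • B i : S) : Y) = ∑ i, c i • y i := by
      rw [coe_subgroup_sum]
      exact Finset.sum_congr rfl fun i _ => by rw [hB]
    have h2S : (2:ℤ) • (∑ i, c i • B i : S) = 0 := by
      apply Subtype.coe_injective
      push_cast
      have hbb : ∑ x, c x • ((B x : Y)) = ∑ i, c i • y i :=
        Finset.sum_congr rfl fun i _ => by rw [hB]
      rw [hbb]
      rw [← Nat.cast_smul_eq_nsmul ℤ] at h2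
      exact_mod_cast h2
    have hrel : ∑ i, ((2:ℤ) * c i) • B i = 0 := by
      rw [← h2S, Finset.smul_sum]
      exact Finset.sum_congr rfl fun i _ => by rw [smul_smul]
    intro i
    have := Fintype.linearIndependent_iff.mp B.linearIndependent _ hrel i
    omega
  -- the complement has trivial free part
  have hCfree : ∀ t ∈ C, (W.eY.symm t).1 = 0 := by
    intro t ht
    set w : Option (Fin g) → (Fin g → ℤ) :=
      fun o => o.elim ((W.eY.symm t).1) row with hwdef
    have hnli : ¬ LinearIndependent ℤ w := by
      intro h
      have hc := h.fintype_card_le_finrank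
      simp only [Fintype.card_option, Fintype.card_fin, Module.finrank_pi] at hc
      omega
    obtain ⟨cc, hsum, i0, hi0⟩ := Fintype.not_linearIndependent_iff.mp hnli
    rw [Fintype.sum_option] at hsum
    have hnone : cc none ≠ 0 := by
      intro h0
      rw [h0, zero_smul, zero_add] at hsum
      have hz := Fintype.linearIndependent_iff.mp hrow_indep (fun i => cc (some i)) hsum
      cases i0 with
      | none => exact hi0 h0
      | some i => exact hi0 (hz i)
    set s : S := ∑ i, cc (some i) • B i with hsdef
    have hπs : (W.eY.symm ((s : Y))).1 = ∑ i, cc (some i) • row i := by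
      rw [hsdef, coe_subgroup_sum, free_part_sum]
      exact Finset.sum_congr rfl fun i _ => by rw [hB]
    have hπu : (W.eY.symm (cc none • t + (s : Y))).1 = 0 := by
      rw [map_add]
      have : (W.eY.symm (cc none • t) + W.eY.symm ((s:Y))).1
          = (W.eY.symm (cc none • t)).1 + (W.eY.symm ((s:Y))).1 := rfl
      rw [this, hπs, map_zsmul, Prod.smul_fst]
      exact hsum
    have h2u : (2:ℕ) • (cc none • t + (s : Y)) = 0 := tors_of_free_part W _ hπu
    have hsplit : (2:ℕ) • (cc none • t) + (2:ℕ) • ((s:Y)) = 0 := by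
      rw [← smul_add]; exact h2u
    have hmemS : (2:ℕ) • (cc none • t) ∈ S := by
      have : (2:ℕ) • (cc none • t) = -((2:ℕ) • ((s:Y))) := by
        linear_combination (norm := abel) hsplit
      rw [this]
      exact neg_mem (AddSubgroup.nsmul_mem S s.2 2)
    have hmemC : (2:ℕ) • (cc none • t) ∈ C := AddSubgroup.nsmul_mem C (C.zsmul_mem ht _) 2
    have hzero : (2:ℕ) • (cc none • t) = 0 := by
      have hmm : (2:ℕ) • (cc none • t) ∈ S ⊓ C := ⟨hmemS, hmemC⟩
      rwa [hSC.inf_eq_bot, AddSubgroup.mem_bot] at hmm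
    have hfinal : ((2:ℤ) * cc none) • (W.eY.symm t).1 = 0 := by
      have h1 : (W.eY.symm ((2:ℕ) • (cc none • t))).1 = 0 := by rw [hzero]; simp
      rw [← Nat.cast_smul_eq_nsmul ℤ, smul_smul, map_zsmul] at h1
      rw [← h1, Prod.smul_fst]
      norm_num
    rcases smul_eq_zero.mp hfinal with h | h
    · omega
    · exact h
  -- the rows span ℤ^g
  have hrow_span : ⊤ ≤ Submodule.span ℤ (Set.range row) := by
    intro v _
    rw [Submodule.mem_span_range_iff_exists_fun]
    have hvmem : W.eY (v, 0) ∈ S ⊔ C := by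
      rw [hSC.sup_eq_top]; exact AddSubgroup.mem_top _
    obtain ⟨a, haS, b, hbC, hab⟩ := AddSubgroup.mem_sup.mp hvmem
    refine ⟨fun i => B.repr ⟨a, haS⟩ i, ?_⟩
    have hsum : (∑ i, B.repr ⟨a, haS⟩ i • B i) = ⟨a, haS⟩ := B.sum_repr _
    have h1 : (W.eY.symm a).1 = ∑ i, B.repr ⟨a, haS⟩ i • row i := by
      have hca : a = ((∑ i, B.repr ⟨a, haS⟩ i • B i : S) : Y) := by rw [hsum]
      conv_lhs => rw [hca]
      rw [coe_subgroup_sum, free_part_sum]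
      exact Finset.sum_congr rfl fun i _ => by rw [hB]
    have h2 : (W.eY.symm b).1 = 0 := hCfree b hbC
    have h3 : (W.eY.symm (a + b)).1 = v := by
      rw [hab]; rw [W.eY.symm_apply_apply]
    rw [map_add] at h3
    have h4 : (W.eY.symm a).1 + (W.eY.symm b).1 = v := h3
    rw [h2, add_zero] at h4
    rw [← h1, h4]
  -- basis of ℤ^g and invertibility of M
  let vB : Module.Basis (Fin g) ℤ (Fin g → ℤ) := Module.Basis.mk hrow_indep hrow_span
  have hMT : (Pi.basisFun ℤ (Fin g)).toMatrix (⇑vB) = M.transpose := by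
    ext i j
    rw [Module.Basis.toMatrix_apply, Pi.basisFun_repr, Matrix.transpose_apply]
    show (vB j) i = row j i
    rw [show ⇑vB = row from Module.Basis.coe_mk _ _]
  have hdetM : IsUnit M.det := by
    have h := (Pi.basisFun ℤ (Fin g)).isUnit_det vB
    rw [Module.Basis.det_apply, hMT, Matrix.det_transpose] at h
    exact h
  have hMMi : M * M⁻¹ = 1 := Matrix.mul_nonsing_inv M hdetM
  have hMiM : M⁻¹ * M = 1 := Matrix.nonsing_inv_mul M hdetM
  set f2 : ℤ →+* ZMod 2 := Int.castRingHom (ZMod 2) with hf2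
  set Mb : Matrix (Fin g) (Fin g) (ZMod 2) := M.map f2 with hMb
  set Nb : Matrix (Fin g) (Fin g) (ZMod 2) := (M⁻¹).map f2 with hNb
  have hMbNb : Mb * Nb = 1 := by
    rw [hMb, hNb, ← Matrix.map_mul, hMMi]
    exact Matrix.map_one _ (map_zero f2) (map_one f2)
  have hNbMb : Nb * Mb = 1 := by
    rw [hMb, hNb, ← Matrix.map_mul, hMiM]
    exact Matrix.map_one _ (map_zero f2) (map_one f2)
  -- the distinguished elements
  set xx : Fin g → X := fun i => ∑ k, (M⁻¹) k i • W.bX k with hxx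
  set zz : Fin g → Y := fun j => W.eY (0, fun l => Nb l j) with hzz
  have h2z : ∀ j, (2:ℕ) • zz j = 0 := fun j => eY_tors W _
  have hsum_z : ∀ c : Fin g → ZMod 2, ∑ i, (c i).val • zz i = W.eY (0, Nb *ᵥ c) :=
    fun c => sum_val_smul_col W c Nb
  have hcast : ∀ i l, (((W.eY.symm (y i)).1 l : ℤ) : ZMod 2) = Mb i l := fun i l => rfl
  have hq_y_z : ∀ i j, W.qf (y i) (zz j) = if i = j then 1 else 0 := by
    intro i j
    rw [hzz, W.qf_symm, qf_tors_w]
    calc ∑ l, Nb l j * (((W.eY.symm (y i)).1 l : ℤ) : ZMod 2)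
        = ∑ l, Mb i l * Nb l j := by
          exact Finset.sum_congr rfl fun l _ => by rw [hcast, mul_comm]
      _ = (Mb * Nb) i j := (Matrix.mul_apply).symm
      _ = if i = j then 1 else 0 := by rw [hMbNb, Matrix.one_apply]
  have hlam_row : ∀ (x : X) (j : Fin g),
      W.lam x (y j) = ∑ k, W.bX.repr x k * row j k := by
    intro x j
    conv_lhs => rw [← W.bX.sum_repr x]
    rw [lam_sum_apply]
    exact Finset.sum_congr rfl fun k _ => by rw [lam_bX]
  have hlam_xy : ∀ i j, W.lam (xx i) (y j) = if i = j then 1 else 0 := by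
    intro i j
    rw [hxx, lam_sum_apply]
    calc ∑ k, M⁻¹ k i * W.lam (W.bX k) (y j)
        = ∑ k, M j k * M⁻¹ k i := by
          exact Finset.sum_congr rfl fun k _ => by rw [lam_bX, mul_comm]; rfl
      _ = (M * M⁻¹) j i := (Matrix.mul_apply).symm
      _ = if i = j then 1 else 0 := by
          rw [hMMi, Matrix.one_apply]
          by_cases h : i = j
          · simp [h]
          · rw [if_neg (fun hji => h hji.symm), if_neg h]
  refine ⟨⟨xx, zz⟩, ⟨?_, ?_, ?_, ?_, ?_, ?_, ?_, ?_, ?_, ?_⟩, ?_⟩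
  · -- basis of X
    have hdetMi : IsUnit (M⁻¹).det := Matrix.isUnit_nonsing_inv_det M hdetM
    refine ⟨W.bX.map (Matrix.toLinearEquiv W.bX (M⁻¹) hdetMi), fun i => ?_⟩
    rw [Module.Basis.map_apply, Matrix.toLinearEquiv_apply, Matrix.toLin_self]
  · -- torsion membership
    intro i
    rw [AddCommGroup.mem_torsion]
    exact isOfFinAddOrder_iff_nsmul_eq_zero.mpr ⟨2, by norm_num, h2z i⟩
  · exact h2z
  · -- spanning of torsion
    intro t ht
    rw [AddCommGroup.mem_torsion] at ht
    obtain ⟨n, hn, hnt⟩ := isOfFinAddOrder_iff_nsmul_eq_zero.mp ht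
    have hfree : (W.eY.symm t).1 = 0 := by
      have h1 : (n:ℤ) • (W.eY.symm t).1 = 0 := by
        have : (W.eY.symm (n • t)).1 = 0 := by rw [hnt]; simp
        rw [← Nat.cast_smul_eq_nsmul ℤ, map_zsmul] at this
        rw [← this, Prod.smul_fst]
      rcases smul_eq_zero.mp h1 with h | h
      · exfalso; exact_mod_cast hn.ne' (by exact_mod_cast h)
      · exact h
    refine ⟨Mb *ᵥ (W.eY.symm t).2, ?_⟩
    rw [hsum_z, Matrix.mulVec_mulVec, hNbMb, Matrix.one_mulVec]
    exact eq_tors_of_free_part W t hfree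
  · -- independence in torsion
    intro c hc
    rw [hsum_z] at hc
    have h0 : ((0 : Fin g → ℤ), Nb *ᵥ c) = 0 := by
      apply W.eY.injective
      rw [hc, map_zero]
    have h1 : Nb *ᵥ c = 0 := congrArg Prod.snd h0
    have : Mb *ᵥ (Nb *ᵥ c) = c := by
      rw [Matrix.mulVec_mulVec, hMbNb, Matrix.one_mulVec]
    rw [h1, Matrix.mulVec_zero] at this
    exact this.symm
  · exact hlam_xy
  · exact fun i j => lam_tors W _ _ (h2z j)
  · exact hq_y_z
  · exact fun i j => qf_tors_tors W _ _
  · exact fun i => alpha_tors W _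
  · -- uniqueness
    rintro ⟨x', z'⟩ ⟨-, -, h2', -, -, hlam', -, hq', -, -⟩
    have h2'' : ∀ i, (2:ℕ) • z' i = 0 := h2'
    have hlam'' : ∀ i j, W.lam (x' i) (y j) = if i = j then 1 else 0 := hlam'
    have hq'' : ∀ i j, W.qf (y i) (z' j) = if i = j then 1 else 0 := hq'
    have hzeq : z' = zz := by
      funext j
      have hfree : (W.eY.symm (z' j)).1 = 0 := free_part_of_tors W _ (h2'' j)
      have hz'eq : z' j = W.eY (0, (W.eY.symm (z' j)).2) := eq_tors_of_free_part W _ hfree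
      set b : Fin g → ZMod 2 := (W.eY.symm (z' j)).2 with hbdef
      have hqcomp : ∀ i, (Mb *ᵥ b) i = if i = j then 1 else 0 := by
        intro i
        have := hq'' i j
        rw [hz'eq, W.qf_symm, qf_tors_w] at this
        rw [← this, Matrix.mulVec]
        rw [dotProduct]
        exact Finset.sum_congr rfl fun l _ => by rw [hcast, mul_comm]
      have hMvb : Mb *ᵥ b = Pi.single j 1 := by
        funext i
        rw [hqcomp i, Pi.single_apply]
      have hbeq : b = fun l => Nb l j := by
        have h1 : Nb *ᵥ (Mb *ᵥ b) = b := by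
          rw [Matrix.mulVec_mulVec, hNbMb, Matrix.one_mulVec]
        rw [hMvb, Matrix.mulVec_single] at h1
        rw [← h1]
        funext l
        simp
      rw [hz'eq, hbeq, hzz]
    have hxeq : x' = xx := by
      funext i
      set d : Fin g → ℤ := fun k => W.bX.repr (x' i) k with hddef
      have hMd : M *ᵥ d = Pi.single i 1 := by
        funext j
        have := hlam'' i j
        rw [hlam_row] at this
        rw [Matrix.mulVec, dotProduct, Pi.single_apply]
        calc ∑ k, M j k * d k = ∑ k, d k * row j k := by
              exact Finset.sum_congr rfl fun k _ => by rw [mul_comm]; rfl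
          _ = if i = j then 1 else 0 := this
          _ = if j = i then 1 else 0 := by
              by_cases h : i = j
              · simp [h]
              · rw [if_neg h, if_neg (fun hji => h hji.symm)]
      have hdeq : d = fun k => M⁻¹ k i := by
        have h1 : M⁻¹ *ᵥ (M *ᵥ d) = d := by
          rw [Matrix.mulVec_mulVec, hMiM, Matrix.one_mulVec]
        rw [hMd, Matrix.mulVec_single] at h1
        rw [← h1]
        funext l
        simp
      have : x' i = ∑ k, d k • W.bX k := by
        rw [hddef]
        exact (W.bX.sum_repr (x' i)).symm
      rw [this, hdeq, hxx]
    rw [hxeq, hzeq]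
end

section
/- Let X be a set and let F ⊆ 𝒪(X) be a sub-poset satisfying the chain condition. Let v = (v_1, …, v_k) ∈ F. Then the poset F_{>v} = {w ∈ F : v < w} is order-isomorphic to the poset Z^k(F_v), via the map which replaces each occurrence of v_i in a sequence by the formal symbol z_i. -/
/-- `𝒪(X)`: the poset of nonempty finite sequences of distinct elements of `X`,
ordered by "is an ordered subsequence of". -/
def OSeq (X : Type) : Type := {l : List X // l ≠ [] ∧ l.Nodup}

instance (X : Type) : PartialOrder (OSeq X) where
  le a b := a.val.Sublist b.val
  le_refl a := List.Sublist.refl _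
  le_trans a b c hab hbc := List.Sublist.trans hab hbc
  le_antisymm a b hab hba := Subtype.ext (List.Sublist.antisymm hab hba)

/-- A sub-poset `F ⊆ 𝒪(X)` satisfies the chain condition if it is closed under passing to
(ordered) subsequences and under permutations. -/
def ChainCond {X : Type} (F : Set (OSeq X)) : Prop :=
  (∀ v ∈ F, ∀ u : OSeq X, u ≤ v → u ∈ F) ∧
  (∀ v ∈ F, ∀ u : OSeq X, u.val.Perm v.val → u ∈ F)

/-- `F_v`: the poset of sequences `w` such that the concatenation `w · v` consists of
distinct elements and lies in `F`. -/
def seqRes {X : Type} (F : Set (OSeq X)) (v : OSeq X) : Set (OSeq X) :=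
  {w | ∃ h : (w.val ++ v.val ≠ [] ∧ (w.val ++ v.val).Nodup),
    (⟨w.val ++ v.val, h⟩ : OSeq X) ∈ F}

/-- The sequence `(z_1, …, z_n)` of formal symbols, as elements of `X ⊕ Fin n`. -/
def zList (X : Type) (n : ℕ) : List (X ⊕ Fin n) := (List.finRange n).map Sum.inr

/-- `Z^n F`: sequences `w` in `𝒪(X ⊔ {z_1,…,z_n})` with `(z_1,…,z_n) ≤ w` whose
subsequence complementary to the `z_i` lies in `F`. -/
def ZSet {X : Type} (n : ℕ) (F : Set (OSeq X)) : Set (OSeq (X ⊕ Fin n)) :=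
  {w | (zList X n).Sublist w.val ∧
    ∃ h : (w.val.filterMap Sum.getLeft? ≠ [] ∧ (w.val.filterMap Sum.getLeft?).Nodup),
      (⟨w.val.filterMap Sum.getLeft?, h⟩ : OSeq X) ∈ F}

section Aux
set_option linter.unusedSectionVars false
variable {X : Type} [DecidableEq X]

/-- The map replacing each `v_i` by the formal symbol `z_i`. -/
def fwd (v : List X) (x : X) : X ⊕ Fin v.length :=
  if h : x ∈ v then Sum.inr ⟨v.idxOf x, List.idxOf_lt_length_iff.mpr h⟩ else Sum.inl x

/-- The inverse map, substituting `v_i` for `z_i`. -/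
def bwd (v : List X) : X ⊕ Fin v.length → X
  | Sum.inl x => x
  | Sum.inr i => v.get i

lemma bwd_fwd (v : List X) (x : X) : bwd v (fwd v x) = x := by
  unfold fwd
  split
  · exact List.idxOf_get _
  · rfl

lemma fwd_inj (v : List X) : Function.Injective (fwd v) :=
  fun x y h => by rw [← bwd_fwd v x, h, bwd_fwd]

lemma fwd_getElem (v : List X) (hv : v.Nodup) (i : ℕ) (h : i < v.length) :
    fwd v v[i] = Sum.inr ⟨i, h⟩ := by
  have hm : v[i] ∈ v := List.getElem_mem h
  simp only [fwd, dif_pos hm]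
  congr 1
  ext
  simpa using List.Nodup.idxOf_getElem hv i h

lemma map_fwd_self (v : List X) (hv : v.Nodup) :
    v.map (fwd v) = zList X v.length := by
  apply List.ext_getElem (by simp [zList])
  intro i h1 h2
  have h1' : i < v.length := by simpa using h1
  simp only [List.getElem_map, zList]
  rw [fwd_getElem v hv i h1']
  congr 1
  simp [List.getElem_finRange]

lemma filterMap_fwd (v w : List X) :
    (w.map (fwd v)).filterMap Sum.getLeft? = w.filter (fun x => !(decide (x ∈ v))) := by
  induction w with
  | nil => rfl
  | cons a w ih =>
    by_cases h : a ∈ v <;>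
      simp [fwd, h, ih, List.filterMap_cons, List.filter_cons]

lemma map_bwd_filter_left (v : List X) (u : List (X ⊕ Fin v.length)) :
    (u.filter Sum.isLeft).map (bwd v) = u.filterMap Sum.getLeft? := by
  induction u with
  | nil => rfl
  | cons a u ih => cases a <;> simp [List.filter_cons, List.filterMap_cons, ih, bwd]

lemma zList_nodup (X : Type) (n : ℕ) : (zList X n).Nodup :=
  (List.nodup_finRange n).map Sum.inr_injective

lemma mem_zList (X : Type) (n : ℕ) (i : Fin n) : Sum.inr i ∈ zList X n :=
  List.mem_map.mpr ⟨i, List.mem_finRange i, rfl⟩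

lemma map_bwd_zList (v : List X) : (zList X v.length).map (bwd v) = v := by
  unfold zList
  rw [List.map_map]
  calc (List.finRange v.length).map (bwd v ∘ Sum.inr)
      = (List.finRange v.length).map v.get := List.map_congr_left fun i _ => rfl
    _ = v := List.map_get_finRange v

lemma map_bwd_fwd (v w : List X) : (w.map (fwd v)).map (bwd v) = w := by
  rw [List.map_map]
  calc w.map (bwd v ∘ fwd v) = w.map id := List.map_congr_left fun a _ => bwd_fwd v a
    _ = w := List.map_id w

lemma fwd_mem {F : Set (OSeq X)} (hF : ChainCond F) (v : OSeq X)
    (w : OSeq X) (hwF : w ∈ F) (hvw : v < w) :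
    ∃ h : (w.val.map (fwd v.val) ≠ [] ∧ (w.val.map (fwd v.val)).Nodup),
      (⟨w.val.map (fwd v.val), h⟩ : OSeq (X ⊕ Fin v.val.length)) ∈
        ZSet v.val.length (seqRes F v) := by
  have hsub : v.val.Sublist w.val := hvw.le
  have hne : v.val ≠ w.val := fun h => (ne_of_lt hvw) (Subtype.ext h)
  refine ⟨⟨by simp [w.prop.1], w.prop.2.map (fwd_inj v.val)⟩, ?_, ?_⟩
  · rw [← map_fwd_self v.val v.prop.2]
    exact hsub.map _
  · -- the complementary subsequence lies in seqRes F v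
    rw [filterMap_fwd]
    set t := w.val.filter (fun x => !(decide (x ∈ v.val))) with ht
    have htnd : t.Nodup := w.prop.2.sublist (List.filter_sublist)
    have htne : t ≠ [] := by
      intro h0
      have hall : ∀ x ∈ w.val, x ∈ v.val := by
        intro x hx
        by_contra hxv
        have : x ∈ t := List.mem_filter.mpr ⟨hx, by simpa using hxv⟩
        simp [h0] at this
      have hsp : w.val.Subperm v.val := w.prop.2.subperm hall
      exact hne (hsub.eq_of_length_le hsp.length_le)
    have hdisj : t.Disjoint v.val := by
      intro x hxt hxv
      have := (List.mem_filter.mp hxt).2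
      simp at this
      exact this hxv
    have hperm : (t ++ v.val).Perm w.val := by
      have h1 := List.filter_append_perm (fun x => !(decide (x ∈ v.val))) w.val
      have h2 : (w.val.filter (fun x => !(!(decide (x ∈ v.val))))).Perm v.val := by
        apply List.Subperm.antisymm
        · apply (w.prop.2.sublist (List.filter_sublist)).subperm
          intro x hx
          have := (List.mem_filter.mp hx).2
          simpa using this
        · apply v.prop.2.subperm
          intro x hx
          exact List.mem_filter.mpr ⟨hsub.subset hx, by simpa using hx⟩
      exact (List.Perm.append_left t h2.symm).trans h1
    have hnd : (t ++ v.val).Nodup := by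
      rw [List.nodup_append]
      exact ⟨htnd, v.prop.2, fun a ha b hb hab => hdisj ha (hab ▸ hb)⟩
    refine ⟨⟨htne, htnd⟩, ?_⟩
    refine ⟨⟨by simp [v.prop.1], hnd⟩, ?_⟩
    exact hF.2 w hwF _ hperm

lemma mem_lefts_iff {n : ℕ} (u : List (X ⊕ Fin n)) (x : X) :
    x ∈ u.filterMap Sum.getLeft? ↔ Sum.inl x ∈ u := by
  rw [List.mem_filterMap]
  constructor
  · rintro ⟨a, ha, hax⟩
    cases a with
    | inl y => simp at hax; subst hax; exact ha
    | inr i => simp at hax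
  · intro h
    exact ⟨Sum.inl x, h, rfl⟩

lemma bwd_mem {F : Set (OSeq X)} (hF : ChainCond F) (v : OSeq X)
    (u : OSeq (X ⊕ Fin v.val.length)) (hu : u ∈ ZSet v.val.length (seqRes F v)) :
    ∃ h : (u.val.map (bwd v.val) ≠ [] ∧ (u.val.map (bwd v.val)).Nodup),
      (⟨u.val.map (bwd v.val), h⟩ : OSeq X) ∈ F ∧
        v < (⟨u.val.map (bwd v.val), h⟩ : OSeq X) := by
  obtain ⟨hz, ⟨hLne, hLnd⟩, ⟨_, hnd2⟩, hLF⟩ := hu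
  set L := u.val.filterMap Sum.getLeft? with hL
  have hdisj : L.Disjoint v.val := ((List.nodup_append'.mp hnd2).2.2)
  -- the substituted list is a permutation of L ++ v
  have hfperm : ((u.val.filter (fun a => !(Sum.isLeft a))).Perm (zList X v.val.length)) := by
    apply List.Subperm.antisymm
    · apply (u.prop.2.sublist (List.filter_sublist)).subperm
      intro a ha
      have h2 := (List.mem_filter.mp ha).2
      cases a with
      | inl x => simp at h2
      | inr i => exact mem_zList X _ i
    · apply (zList_nodup X _).subperm
      intro a ha
      obtain ⟨i, _, rfl⟩ := List.mem_map.mp ha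
      refine List.mem_filter.mpr ⟨hz.subset ha, by simp⟩
  have hperm : (u.val.map (bwd v.val)).Perm (L ++ v.val) := by
    have h1 := (List.filter_append_perm Sum.isLeft u.val).map (bwd v.val)
    rw [List.map_append, map_bwd_filter_left] at h1
    have h2 := hfperm.map (bwd v.val)
    rw [map_bwd_zList] at h2
    exact h1.symm.trans (List.Perm.append_left L h2)
  have hmnd : (u.val.map (bwd v.val)).Nodup := hperm.nodup_iff.mpr hnd2
  have hmne : u.val.map (bwd v.val) ≠ [] := by simp [u.prop.1]
  refine ⟨⟨hmne, hmnd⟩, ?_, ?_⟩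
  · exact hF.2 _ hLF _ hperm
  · have hle : v.val.Sublist (u.val.map (bwd v.val)) := by
      have h0 := hz.map (bwd v.val)
      rwa [map_bwd_zList] at h0
    have hlen : v.val.length < (u.val.map (bwd v.val)).length := by
      rw [hperm.length_eq, List.length_append]
      have : 0 < L.length := List.length_pos_iff.mpr hLne
      omega
    refine lt_of_le_of_ne hle ?_
    intro h
    have h' : v.val = u.val.map (bwd v.val) := congrArg Subtype.val h
    have h2 := congrArg List.length h'
    omega

lemma fwd_bwd_mem {F : Set (OSeq X)} (v : OSeq X)
    (u : OSeq (X ⊕ Fin v.val.length)) (hu : u ∈ ZSet v.val.length (seqRes F v)) :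
    (u.val.map (bwd v.val)).map (fwd v.val) = u.val := by
  obtain ⟨hz, ⟨hLne, hLnd⟩, ⟨_, hnd2⟩, hLF⟩ := hu
  have hdisj : (u.val.filterMap Sum.getLeft?).Disjoint v.val :=
    ((List.nodup_append'.mp hnd2).2.2)
  rw [List.map_map]
  calc u.val.map (fwd v.val ∘ bwd v.val) = u.val.map id := by
        apply List.map_congr_left
        intro a ha
        cases a with
        | inl x =>
          have hx : x ∉ v.val := fun hxv =>
            hdisj ((mem_lefts_iff u.val x).mpr ha) hxv
          simp only [Function.comp_apply, bwd, fwd, dif_neg hx, id]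
          simp [hx]
        | inr i =>
          simp only [Function.comp_apply, bwd, List.get_eq_getElem, id]
          exact fwd_getElem v.val v.prop.2 i.1 i.2
    _ = u.val := List.map_id _

end Aux

/-- For a sub-poset `F ⊆ 𝒪(X)` satisfying the chain condition and
`v = (v_1,…,v_k) ∈ F`, the poset `F_{>v} = {w ∈ F : v < w}` is order-isomorphic to
`Z^k(F_v)`, via the map replacing each occurrence of `v_i` by the formal symbol `z_i`. -/
theorem seqRes_gt_orderIso_ZSet {X : Type} [DecidableEq X] (F : Set (OSeq X))
    (hF : ChainCond F) (v : OSeq X) (hv : v ∈ F) :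
    ∃ e : {w : OSeq X // w ∈ F ∧ v < w} ≃o
        {w : OSeq (X ⊕ Fin v.val.length) // w ∈ ZSet v.val.length (seqRes F v)},
      ∀ w : {w : OSeq X // w ∈ F ∧ v < w},
        ((e w).val.val : List (X ⊕ Fin v.val.length)) =
          w.val.val.map (fun x =>
            if h : x ∈ v.val then
              Sum.inr (⟨v.val.idxOf x, List.idxOf_lt_length_iff.mpr h⟩ : Fin v.val.length)
            else Sum.inl x) := by
  refine ⟨{
    toFun := fun p =>
      ⟨⟨p.val.val.map (fwd v.val), (fwd_mem hF v p.val p.prop.1 p.prop.2).choose⟩,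
        (fwd_mem hF v p.val p.prop.1 p.prop.2).choose_spec⟩
    invFun := fun q =>
      ⟨⟨q.val.val.map (bwd v.val), (bwd_mem hF v q.val q.prop).choose⟩,
        (bwd_mem hF v q.val q.prop).choose_spec⟩
    left_inv := fun p => by
      apply Subtype.ext
      apply Subtype.ext
      exact map_bwd_fwd v.val p.val.val
    right_inv := fun q => by
      apply Subtype.ext
      apply Subtype.ext
      exact fwd_bwd_mem v q.val q.prop
    map_rel_iff' := by
      intro a b
      constructor
      · intro h
        have h' : (a.val.val.map (fwd v.val)).Sublist (b.val.val.map (fwd v.val)) := h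
        have := h'.map (bwd v.val)
        rw [map_bwd_fwd, map_bwd_fwd] at this
        exact this
      · intro h
        have h' : a.val.val.Sublist b.val.val := h
        exact h'.map (fwd v.val) }, fun w => rfl⟩
end

section
/- Let (X, Y, λ, q, α) be a Wall pairing, and let F_0 ⊆ M(X,Y) be the sub-poset of sequences ((x_1,y_1),…,(x_k,y_k)) ∈ M(X,Y) such that y_j ≠ 0 for at least one j. Define h : F_0 → L(X,Y) by sending a sequence to its subsequence of pairs (x_l, y_l) with y_l ≠ 0. Then h is a well-defined order-preserving map, h ∘ j = id on L(X,Y) where j : L(X,Y) → F_0 is the inclusion, and j(h(z)) ≤ z for every z ∈ F_0. -/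
section
variable {g : ℕ} {X Y A : Type} [AddCommGroup X] [AddCommGroup Y] [AddCommGroup A]

/-- Membership in the poset `L(X,Y)`: a nonempty list of distinct pairs
`((x_1,y_1),…,(x_k,y_k))` with `λ(x_i,y_j) = δ_{ij}`, `q(y_i,y_j) = 0` and `α(y_i) = 0`.
The partial order on such lists is the (ordered) sublist relation. -/
def LMem (W : WallPairing g X Y A) (l : List (X × Y)) : Prop :=
  l ≠ [] ∧ l.Nodup ∧
  (∀ i j : Fin l.length, W.lam (l.get i).1 (l.get j).2 = if i = j then 1 else 0) ∧
  (∀ i j : Fin l.length, W.qf (l.get i).2 (l.get j).2 = 0) ∧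
  (∀ i : Fin l.length, W.alpha (l.get i).2 = 0)

/-- Membership in the poset `M(X,Y)`: a nonempty list of distinct pairs such that the
`x_i` form a unimodular sequence in `X`, `α(y_i) = 0`, each `y_i` is either `0` or dual to
the `x_j`'s, and `q(y_i,y_j) = 0`. -/
def MMem (W : WallPairing g X Y A) (l : List (X × Y)) : Prop :=
  l ≠ [] ∧ l.Nodup ∧
  LinearIndependent ℤ (fun i : Fin l.length => (l.get i).1) ∧
  (∃ C : Submodule ℤ X,
    IsCompl (Submodule.span ℤ (Set.range fun i : Fin l.length => (l.get i).1)) C) ∧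
  (∀ i : Fin l.length, W.alpha (l.get i).2 = 0) ∧
  (∀ i : Fin l.length, (l.get i).2 = 0 ∨
    ∀ j : Fin l.length, W.lam (l.get j).1 (l.get i).2 = if j = i then 1 else 0) ∧
  (∀ i j : Fin l.length, W.qf (l.get i).2 (l.get j).2 = 0)

/-- Membership in the sub-poset `F_0 ⊆ M(X,Y)` of sequences with at least one `y_j ≠ 0`. -/
def F0Mem (W : WallPairing g X Y A) (l : List (X × Y)) : Prop :=
  MMem W l ∧ ∃ i : Fin l.length, (l.get i).2 ≠ 0

/-- The map `h` sending a sequence to its subsequence of pairs `(x_l, y_l)` with `y_l ≠ 0`. -/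
def hmap [DecidableEq Y] (l : List (X × Y)) : List (X × Y) :=
  l.filter fun p => decide (p.2 ≠ 0)

/-- `h : F_0 → L(X,Y)` is a well-defined order-preserving map (with respect to
the sublist order), `h ∘ j = id` on `L(X,Y)` for the inclusion `j : L(X,Y) → F_0`, and
`j(h(z)) ≤ z` for every `z ∈ F_0`. -/
theorem F0_retracts_onto_L [DecidableEq Y] (W : WallPairing g X Y A) :
    (∀ l : List (X × Y), F0Mem W l → LMem W (hmap l)) ∧
    (∀ l l' : List (X × Y), F0Mem W l → F0Mem W l' → l.Sublist l' →
      (hmap l).Sublist (hmap l')) ∧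
    (∀ l : List (X × Y), LMem W l → hmap l = l) ∧
    (∀ l : List (X × Y), F0Mem W l → (hmap l).Sublist l) := by
  have hsub : ∀ l : List (X × Y), (hmap l).Sublist l := fun l => List.filter_sublist
  refine ⟨?_, fun l l' _ _ h => h.filter _, ?_, fun l _ => hsub l⟩
  · intro l hl
    obtain ⟨⟨_, hnd, _, _, hal, hdual, hq⟩, i0, hi0⟩ := hl
    obtain ⟨f, hf⟩ := List.sublist_iff_exists_fin_orderEmbedding_get_eq.mp (hsub l)
    have hne : ∀ i : Fin (hmap l).length, ((hmap l).get i).2 ≠ 0 := by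
      intro i
      have := List.of_mem_filter ((hmap l).get_mem i)
      simpa using this
    refine ⟨?_, hnd.filter _, ?_, ?_, ?_⟩
    · intro h
      have : l.get i0 ∈ hmap l := List.mem_filter.mpr ⟨l.get_mem i0, by simpa using hi0⟩
      simp [h] at this
    · intro i j
      rw [hf i, hf j]
      have hd := (hdual (f j)).resolve_left (by rw [← hf j]; exact hne j)
      rw [hd (f i)]
      simp [f.injective.eq_iff]
    · intro i j; rw [hf i, hf j]; exact hq _ _
    · intro i; rw [hf i]; exact hal _
  · intro l hl
    obtain ⟨_, _, hlam, _, _⟩ := hl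
    apply List.filter_eq_self.mpr
    intro p hp
    obtain ⟨i, hi⟩ := List.mem_iff_get.mp hp
    have := hlam i i
    simp only [if_pos rfl] at this
    simp only [decide_eq_true_eq]
    intro h
    rw [hi, h] at this
    simp at this

end
end

section
/- Let (X, Y, λ, q, α) be a Wall pairing of rank g with associated homomorphism ρ : X → Torsion(Y), and let (v_1,w_1),…,(v_i,w_i) ∈ X×Y satisfy λ(v_l, w_m) = δ_{lm}, q(w_l, w_m) = 0, and α(w_l) = 0 for all l, m. Set V = span(v_1,…,v_i) and W = span(w_1,…,w_i). Then Y decomposes as an internal direct sum Y = (V^⊥ ∩ Ŵ) ⊕ W ⊕ ρ(V), where V^⊥ = {y ∈ Y : λ(v,y)=0 for all v ∈ V} and Ŵ = {y ∈ Y : q(y,w)=0 for all w ∈ W}. -/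
lemma mem_closure_range_iff' {M : Type} [AddCommGroup M] {i : ℕ} (w : Fin i → M) (y : M) :
    y ∈ AddSubgroup.closure (Set.range w) ↔ ∃ c : Fin i → ℤ, ∑ l, c l • w l = y := by
  rw [← Submodule.span_int_eq_addSubgroupClosure, Submodule.mem_toAddSubgroup,
    Submodule.mem_span_range_iff_exists_fun]

lemma lam_torsion' {X Y : Type} [AddCommGroup X] [AddCommGroup Y] (lam : X →+ Y →+ ℤ) (x : X)
    (t : Y) (ht : t ∈ AddCommGroup.torsion Y) : lam x t = 0 := by
  obtain ⟨n, hn, h⟩ := isOfFinAddOrder_iff_nsmul_eq_zero.mp ht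
  have h2 : (n : ℤ) * lam x t = 0 := by
    have := map_nsmul (lam x) n t
    rw [h, map_zero] at this
    simpa [nsmul_eq_mul] using this.symm
  have := mul_eq_zero.mp h2
  omega

lemma wall_torsion_eq_zero {g : ℕ} {X Y A : Type} [AddCommGroup X] [AddCommGroup Y]
    [AddCommGroup A] (W : WallPairing g X Y A) (t : Y) (ht : t ∈ AddCommGroup.torsion Y)
    (h : ∀ z : Y, W.qf t z = 0) : t = 0 := by
  obtain ⟨n, hn, hnt⟩ := isOfFinAddOrder_iff_nsmul_eq_zero.mp ht
  set p : Fin g → ℤ := (W.eY.symm t).1 with hp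
  set c : Fin g → ZMod 2 := (W.eY.symm t).2 with hc
  have hpzero : p = 0 := by
    have h0 : ((AddMonoidHom.fst (Fin g → ℤ) (Fin g → ZMod 2)).comp
        (W.eY.symm : Y →+ _)) (n • t) = 0 := by rw [hnt, map_zero]
    rw [map_nsmul] at h0
    funext j
    have := congrFun h0 j
    simp only [AddMonoidHom.comp_apply, AddMonoidHom.coe_fst, AddEquiv.coe_toAddMonoidHom,
      Pi.smul_apply, Pi.zero_apply, smul_eq_mul] at this
    have h2 : (n : ℤ) * p j = 0 := by simpa [nsmul_eq_mul] using this
    have := mul_eq_zero.mp h2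
    simpa using by omega
  have hpair : W.eY.symm t = (p, c) := rfl
  have hteq : t = W.eY (0, c) := by
    rw [hpzero] at hpair
    rw [← hpair, AddEquiv.apply_symm_apply]
  have hdecomp : t = ∑ k, (c k).val • W.eY (0, Pi.single k (1 : ZMod 2)) := by
    have hterm : ∀ k : Fin g, (c k).val • W.eY ((0 : Fin g → ℤ), Pi.single k (1 : ZMod 2)) =
        W.eY (AddMonoidHom.inr (Fin g → ℤ) (Fin g → ZMod 2) (Pi.single k (c k))) := by
      intro k
      have h2 : (Pi.single k (c k) : Fin g → ZMod 2) =
          (c k).val • (Pi.single k (1 : ZMod 2) : Fin g → ZMod 2) := by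
        rw [← Pi.single_smul]
        congr 1
        simp [nsmul_eq_mul, ZMod.natCast_val, ZMod.cast_id]
      rw [h2, map_nsmul, map_nsmul]
      rfl
    calc t = W.eY (AddMonoidHom.inr (Fin g → ℤ) (Fin g → ZMod 2) c) := hteq
      _ = W.eY (AddMonoidHom.inr (Fin g → ℤ) (Fin g → ZMod 2) (∑ k, Pi.single k (c k))) := by
          rw [Finset.univ_sum_single]
      _ = ∑ k, W.eY (AddMonoidHom.inr (Fin g → ℤ) (Fin g → ZMod 2) (Pi.single k (c k))) := by
          rw [map_sum, map_sum]
      _ = ∑ k, (c k).val • W.eY (0, Pi.single k (1 : ZMod 2)) :=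
          Finset.sum_congr rfl fun k _ => (hterm k).symm
  have hcj : ∀ j, c j = 0 := by
    intro j
    have h0 : W.qf (W.eY (Pi.single j 1, 0)) t = 0 := by rw [W.qf_symm]; exact h _
    rw [hdecomp, map_sum] at h0
    simp only [map_nsmul, W.q_yz, smul_ite, smul_zero] at h0
    rw [Finset.sum_ite_eq] at h0
    simpa [ZMod.natCast_val, ZMod.cast_id, nsmul_eq_mul] using h0
  have hc0 : c = 0 := funext hcj
  have h5 : W.eY.symm t = ((0 : Fin g → ℤ), (0 : Fin g → ZMod 2)) := by
    rw [hpair, hpzero, hc0]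
  have := congrArg W.eY h5
  simpa [Prod.mk_zero_zero] using this

/-- Given a configuration `(v_1,w_1),…,(v_i,w_i)` with `λ(v_l,w_m) = δ_{lm}`,
`q(w_l,w_m) = 0`, `α(w_l) = 0`, and `V = span(v)`, `W = span(w)`, the module `Y` is the
internal direct sum `(V^⊥ ∩ Ŵ) ⊕ W ⊕ ρ(V)`: every `y ∈ Y` has a unique expression as a sum
of elements of the three subgroups. -/
theorem wallPairing_internal_direct_sum {g : ℕ} {X Y A : Type} [AddCommGroup X]
    [AddCommGroup Y] [AddCommGroup A] (W : WallPairing g X Y A)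
    (ρ : X →+ AddCommGroup.torsion Y)
    (hρ : ∀ (x : X) (y : Y), W.qf (ρ x : Y) y = ((W.lam x y : ℤ) : ZMod 2))
    (i : ℕ) (v : Fin i → X) (w : Fin i → Y)
    (hlam : ∀ l m, W.lam (v l) (w m) = if l = m then 1 else 0)
    (hq : ∀ l m, W.qf (w l) (w m) = 0) (halpha : ∀ l, W.alpha (w l) = 0) :
    ∀ y : Y, ∃! t :
        (↥(lamPerpY W.lam (AddSubgroup.closure (Set.range v)) ⊓
            qPerp W.qf (AddSubgroup.closure (Set.range w))) ×
          (AddSubgroup.closure (Set.range w)) ×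
          ((AddSubgroup.closure (Set.range v)).map
            ((AddCommGroup.torsion Y).subtype.comp ρ))),
      y = (t.1 : Y) + (t.2.1 : Y) + (t.2.2 : Y) := by
  classical
  intro y
  set V := AddSubgroup.closure (Set.range v) with hV
  set Wg := AddSubgroup.closure (Set.range w) with hWg
  -- lam applied to sums in the first argument
  have hlamapply : ∀ (d : Fin i → ℤ) (z : Y),
      W.lam (∑ l, d l • v l) z = ∑ l, d l * W.lam (v l) z := by
    intro d z
    have := map_sum (W.lam.flip z) (fun l => d l • v l) Finset.univ
    simpa [AddMonoidHom.flip_apply, map_zsmul, smul_eq_mul] using this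
  have hlamsum : ∀ (l : Fin i) (d : Fin i → ℤ),
      W.lam (v l) (∑ m, d m • w m) = d l := by
    intro l d
    rw [map_sum]
    simp [hlam, smul_ite]
  have hlamsum' : ∀ (d : Fin i → ℤ) (m : Fin i),
      W.lam (∑ l, d l • v l) (w m) = d m := by
    intro d m
    rw [hlamapply]
    simp [hlam, mul_ite, Finset.sum_ite_eq']
  set a : Fin i → ℤ := fun l => W.lam (v l) y with ha
  set u2 : Y := ∑ l, a l • w l with hu2
  set y' : Y := y - u2 with hy'
  have hlamy' : ∀ l, W.lam (v l) y' = 0 := by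
    intro l
    rw [hy', map_sub, hu2, hlamsum]
    simp [ha]
  set c : Fin i → ℤ := fun l => ((W.qf y' (w l)).val : ℤ) with hc
  set x0 : X := ∑ l, c l • v l with hx0
  set t3 : Y := (ρ x0 : Y) with ht3
  set u1 : Y := y' - t3 with hu1
  have ht3tors : t3 ∈ AddCommGroup.torsion Y := (ρ x0).2
  have hqrho : ∀ (d : Fin i → ℤ) (m : Fin i),
      W.qf ((ρ (∑ l, d l • v l) : Y)) (w m) = ((d m : ℤ) : ZMod 2) := by
    intro d m
    rw [hρ, hlamsum']
  have hcast : ∀ l, ((c l : ℤ) : ZMod 2) = W.qf y' (w l) := by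
    intro l
    simp [hc, ZMod.natCast_val, ZMod.cast_id]
  have hqu1 : ∀ m, W.qf u1 (w m) = 0 := by
    intro m
    rw [hu1, map_sub]
    simp only [AddMonoidHom.sub_apply]
    rw [ht3, hx0, hqrho, hcast]
    exact sub_self _
  have hlamu1 : ∀ l, W.lam (v l) u1 = 0 := by
    intro l
    rw [hu1, map_sub, hlamy', ht3, lam_torsion' W.lam _ _ (ρ x0).2]
    simp
  have hu1mem : u1 ∈ lamPerpY W.lam V ⊓ qPerp W.qf Wg := by
    constructor
    · intro v' hv'
      obtain ⟨d, hd⟩ := (mem_closure_range_iff' v v').mp hv'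
      rw [← hd, hlamapply]
      simp [hlamu1]
    · intro w' hw'
      obtain ⟨d, hd⟩ := (mem_closure_range_iff' w w').mp hw'
      rw [← hd, map_sum]
      simp [hqu1]
  have hu2mem : u2 ∈ Wg := by
    rw [hWg]
    exact AddSubgroup.sum_mem _ fun l _ =>
      AddSubgroup.zsmul_mem _ (AddSubgroup.subset_closure (Set.mem_range_self l)) _
  have hx0mem : x0 ∈ V := by
    rw [hV]
    exact AddSubgroup.sum_mem _ fun l _ =>
      AddSubgroup.zsmul_mem _ (AddSubgroup.subset_closure (Set.mem_range_self l)) _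
  have ht3mem : t3 ∈ V.map ((AddCommGroup.torsion Y).subtype.comp ρ) :=
    ⟨x0, hx0mem, rfl⟩
  refine ⟨(⟨u1, hu1mem⟩, ⟨u2, hu2mem⟩, ⟨t3, ht3mem⟩), ?_, ?_⟩
  · show y = u1 + u2 + t3
    rw [hu1, hy']
    abel
  rintro ⟨⟨u1', hu1'⟩, ⟨u2', hu2'⟩, ⟨u3', hu3'⟩⟩ hy
  simp only at hy
  obtain ⟨x', hx'V, hx'eq0⟩ := hu3'
  have hx'eq : (ρ x' : Y) = u3' := hx'eq0
  obtain ⟨n, hn⟩ := (mem_closure_range_iff' w u2').mp hu2'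
  obtain ⟨m, hm⟩ := (mem_closure_range_iff' v x').mp hx'V
  have hu3tors : u3' ∈ AddCommGroup.torsion Y := hx'eq ▸ (ρ x').2
  have hn_eq : ∀ l, n l = a l := by
    intro l
    have h1 : W.lam (v l) u1' = 0 :=
      hu1'.1 (v l) (AddSubgroup.subset_closure (Set.mem_range_self l))
    have h2 : W.lam (v l) u3' = 0 := lam_torsion' W.lam _ _ hu3tors
    have := congrArg (W.lam (v l)) hy
    rw [map_add, map_add, h1, h2, ← hn, hlamsum] at this
    simpa [ha] using this.symm
  have hu2'eq : u2' = u2 := by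
    rw [← hn, hu2]
    congr 1
    funext l
    rw [hn_eq]
  have hqy : ∀ l, W.qf u3' (w l) = W.qf y' (w l) := by
    intro l
    have h1 : W.qf u1' (w l) = 0 :=
      hu1'.2 (w l) (AddSubgroup.subset_closure (Set.mem_range_self l))
    have h2 : y' = u1' + u3' := by
      rw [hy', hy, hu2'eq]
      abel
    rw [h2, map_add]
    simp only [AddMonoidHom.add_apply]
    rw [h1, zero_add]
  have hmc : ∀ l, ((m l : ℤ) : ZMod 2) = ((c l : ℤ) : ZMod 2) := by
    intro l
    rw [hcast, ← hqy, ← hx'eq, ← hm, hqrho]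
  have hu3'eq : u3' = t3 := by
    have hqdiff : ∀ z : Y, W.qf (u3' - t3) z = 0 := by
      intro z
      have hsub : u3' - t3 = (ρ (x' - x0) : Y) := by
        rw [map_sub, AddSubgroup.coe_sub, hx'eq, ← ht3]
      rw [hsub, hρ]
      have hx : x' - x0 = ∑ l, (m l - c l) • v l := by
        rw [← hm, hx0, ← Finset.sum_sub_distrib]
        congr 1
        funext l
        rw [sub_smul]
      rw [hx, hlamapply]
      rw [Int.cast_sum]
      refine Finset.sum_eq_zero fun l _ => ?_
      rw [Int.cast_mul, Int.cast_sub, hmc, sub_self, zero_mul]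
    have h0 := wall_torsion_eq_zero W (u3' - t3) (AddSubgroup.sub_mem _ hu3tors ht3tors) hqdiff
    exact sub_eq_zero.mp h0
  have hu1'eq : u1' = u1 := by
    rw [hu1, hy', hy, hu2'eq, hu3'eq]
    abel
  simp only [Prod.mk.injEq, Subtype.mk.injEq]
  exact ⟨hu1'eq, hu2'eq, Subtype.ext hu3'eq⟩
end
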